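/- arXiv:2602.21616 — 4 statements merged into one kernel-verified Lean document; each statement's English description precedes it below -/
import Mathlib

section
/- Let H be an infinite-dimensional separable complex Hilbert space and let (xₙ)ₙ∈ℕ be a sequence in H. If there exists a sequence of scalars (cₙ)ₙ∈ℕ such that (cₙ xₙ)ₙ∈ℕ is a frame for H, then (xₙ)ₙ∈ℕ is an unconditional Schauder frame for H. -/
open scoped ComplexInnerProductSpace

noncomputable section

/-- A family `f` in a Hilbert space is a frame. -/
def IsFrame {H : Type*} [NormedAddCommGroup H] [InnerProductSpace ℂ H]
    {ι : Type*} (f : ι → H) : Prop :=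
  ∃ A B : ℝ, 0 < A ∧ 0 < B ∧ ∀ x : H,
    A * ‖x‖ ^ 2 ≤ ∑' i, ‖⟪f i, x⟫‖ ^ 2 ∧ ∑' i, ‖⟪f i, x⟫‖ ^ 2 ≤ B * ‖x‖ ^ 2

/-- A family `f` in a Hilbert space is an unconditional Schauder frame. -/
def IsUnconditionalSchauderFrame {H : Type*} [NormedAddCommGroup H] [InnerProductSpace ℂ H]
    {ι : Type*} (f : ι → H) : Prop :=
  ∃ y : ι → H, ∀ x : H, HasSum (fun i => ⟪y i, x⟫ • f i) x

section AuxFrame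
set_option linter.unusedSectionVars false
variable {H : Type*} [NormedAddCommGroup H] [InnerProductSpace ℂ H] [CompleteSpace H]
variable {f : ℕ → H} {A B : ℝ}

lemma aux_coeff_summable (hA : 0 < A)
    (hlb : ∀ x : H, A * ‖x‖ ^ 2 ≤ ∑' i, ‖⟪f i, x⟫‖ ^ 2) (x : H) :
    Summable (fun i => ‖⟪f i, x⟫‖ ^ 2) := by
  by_cases hx : x = 0
  · simpa [hx] using summable_zero
  · by_contra h
    have h0 := tsum_eq_zero_of_not_summable h
    have h2 := hlb x
    rw [h0] at h2
    nlinarith [mul_pos hA (pow_pos (norm_pos_iff.mpr hx) 2)]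

lemma aux_finite_bound (hB : 0 < B)
    (hub : ∀ x : H, ∑' i, ‖⟪f i, x⟫‖ ^ 2 ≤ B * ‖x‖ ^ 2)
    (hsum : ∀ x : H, Summable (fun i => ‖⟪f i, x⟫‖ ^ 2))
    (a : ℕ → ℂ) (t : Finset ℕ) :
    ‖∑ i ∈ t, a i • f i‖ ^ 2 ≤ B * ∑ i ∈ t, ‖a i‖ ^ 2 := by
  set u := ∑ i ∈ t, a i • f i with hu
  have hSa : (0:ℝ) ≤ ∑ i ∈ t, ‖a i‖ ^ 2 :=
    Finset.sum_nonneg fun i _ => sq_nonneg _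
  by_cases h0 : u = 0
  · rw [h0]
    simpa using mul_nonneg hB.le hSa
  have key : ‖u‖ ^ 2 ≤ ∑ i ∈ t, ‖a i‖ * ‖⟪f i, u⟫‖ := by
    have h1 : (‖u‖:ℝ) ^ 2 = Complex.re ⟪u, u⟫ := (inner_self_eq_norm_sq (𝕜 := ℂ) u).symm
    have h2 : (⟪u, u⟫ : ℂ) = ∑ i ∈ t, (starRingEnd ℂ) (a i) * ⟪f i, u⟫ := by
      rw [hu, sum_inner]
      exact Finset.sum_congr rfl fun i _ => inner_smul_left _ _ _
    rw [h1, h2, Complex.re_sum]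
    refine Finset.sum_le_sum fun i _ => ?_
    calc Complex.re ((starRingEnd ℂ) (a i) * ⟪f i, u⟫)
        ≤ ‖(starRingEnd ℂ) (a i) * ⟪f i, u⟫‖ := Complex.re_le_norm _
      _ = ‖a i‖ * ‖⟪f i, u⟫‖ := by rw [norm_mul, RCLike.norm_conj]
  have cs : (∑ i ∈ t, ‖a i‖ * ‖⟪f i, u⟫‖) ^ 2
      ≤ (∑ i ∈ t, ‖a i‖ ^ 2) * (∑ i ∈ t, ‖⟪f i, u⟫‖ ^ 2) :=
    Finset.sum_mul_sq_le_sq_mul_sq _ _ _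
  have h3 : ∑ i ∈ t, ‖⟪f i, u⟫‖ ^ 2 ≤ B * ‖u‖ ^ 2 :=
    le_trans (Summable.sum_le_tsum t (fun i _ => sq_nonneg _) (hsum u)) (hub u)
  have hM : (0:ℝ) ≤ ∑ i ∈ t, ‖a i‖ * ‖⟪f i, u⟫‖ :=
    Finset.sum_nonneg fun i _ => mul_nonneg (norm_nonneg _) (norm_nonneg _)
  have hupos : (0:ℝ) < ‖u‖ := norm_pos_iff.mpr h0
  nlinarith [pow_le_pow_left₀ (sq_nonneg ‖u‖) key 2, mul_le_mul_of_nonneg_left h3 hSa, mul_pos hupos hupos]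

lemma aux_vec_summable (hB : 0 < B)
    (hub : ∀ x : H, ∑' i, ‖⟪f i, x⟫‖ ^ 2 ≤ B * ‖x‖ ^ 2)
    (hsum : ∀ x : H, Summable (fun i => ‖⟪f i, x⟫‖ ^ 2)) (x : H) :
    Summable (fun i => ⟪f i, x⟫ • f i) := by
  rw [summable_iff_vanishing]
  intro e he
  obtain ⟨ε, hε, hball⟩ := Metric.mem_nhds_iff.mp he
  obtain ⟨s, hs⟩ := (hsum x).vanishing
    (Metric.ball_mem_nhds 0 (show (0:ℝ) < ε ^ 2 / B by positivity))
  refine ⟨s, fun t ht => hball ?_⟩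
  have h1 := aux_finite_bound hB hub hsum (fun i => ⟪f i, x⟫) t
  have h2 := hs t ht
  rw [Metric.mem_ball, dist_zero_right, Real.norm_eq_abs] at h2
  rw [abs_of_nonneg (Finset.sum_nonneg fun i _ => sq_nonneg _)] at h2
  rw [Metric.mem_ball, dist_zero_right]
  have h4 : ‖∑ i ∈ t, ⟪f i, x⟫ • f i‖ ^ 2 < ε ^ 2 := by
    calc ‖∑ i ∈ t, ⟪f i, x⟫ • f i‖ ^ 2 ≤ B * ∑ i ∈ t, ‖⟪f i, x⟫‖ ^ 2 := h1
      _ < B * (ε ^ 2 / B) := by exact (mul_lt_mul_iff_right₀ hB).mpr h2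
      _ = ε ^ 2 := by field_simp
  exact lt_of_pow_lt_pow_left₀ 2 hε.le h4

def frameL (f : ℕ → H) (hv : ∀ x : H, Summable (fun i => ⟪f i, x⟫ • f i)) : H →ₗ[ℂ] H where
  toFun x := ∑' i, ⟪f i, x⟫ • f i
  map_add' x y := by
    have h : HasSum (fun i => ⟪f i, x + y⟫ • f i)
        ((∑' i, ⟪f i, x⟫ • f i) + ∑' i, ⟪f i, y⟫ • f i) := by
      simpa [inner_add_right, add_smul] using (hv x).hasSum.add (hv y).hasSum
    exact h.tsum_eq
  map_smul' c x := by
    have h : HasSum (fun i => ⟪f i, c • x⟫ • f i) (c • ∑' i, ⟪f i, x⟫ • f i) := by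
      simpa [inner_smul_right, smul_smul] using ((hv x).hasSum.const_smul c)
    exact h.tsum_eq

lemma aux_op_bound (hB : 0 < B)
    (hub : ∀ x : H, ∑' i, ‖⟪f i, x⟫‖ ^ 2 ≤ B * ‖x‖ ^ 2)
    (hsum : ∀ x : H, Summable (fun i => ‖⟪f i, x⟫‖ ^ 2))
    (hv : ∀ x : H, Summable (fun i => ⟪f i, x⟫ • f i)) (x : H) :
    ‖frameL f hv x‖ ≤ B * ‖x‖ := by
  have hs := (hv x).hasSum
  have hten : Filter.Tendsto (fun t : Finset ℕ => ‖∑ i ∈ t, ⟪f i, x⟫ • f i‖ ^ 2)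
      Filter.atTop (nhds (‖frameL f hv x‖ ^ 2)) := (hs.norm).pow 2
  have hb : ‖frameL f hv x‖ ^ 2 ≤ B * (B * ‖x‖ ^ 2) := by
    refine le_of_tendsto hten (Filter.Eventually.of_forall fun t => ?_)
    calc ‖∑ i ∈ t, ⟪f i, x⟫ • f i‖ ^ 2
        ≤ B * ∑ i ∈ t, ‖⟪f i, x⟫‖ ^ 2 := aux_finite_bound hB hub hsum _ t
      _ ≤ B * (B * ‖x‖ ^ 2) := by
          refine mul_le_mul_of_nonneg_left ?_ hB.le
          exact le_trans (Summable.sum_le_tsum t (fun i _ => sq_nonneg _) (hsum x)) (hub x)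
  nlinarith [norm_nonneg (frameL f hv x), mul_nonneg hB.le (norm_nonneg x)]

def frameOp (f : ℕ → H) (hB : 0 < B)
    (hub : ∀ x : H, ∑' i, ‖⟪f i, x⟫‖ ^ 2 ≤ B * ‖x‖ ^ 2)
    (hsum : ∀ x : H, Summable (fun i => ‖⟪f i, x⟫‖ ^ 2))
    (hv : ∀ x : H, Summable (fun i => ⟪f i, x⟫ • f i)) : H →L[ℂ] H :=
  LinearMap.mkContinuous (frameL f hv) B (aux_op_bound hB hub hsum hv)

lemma frameOp_hasSum (hB : 0 < B)
    (hub : ∀ x : H, ∑' i, ‖⟪f i, x⟫‖ ^ 2 ≤ B * ‖x‖ ^ 2)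
    (hsum : ∀ x : H, Summable (fun i => ‖⟪f i, x⟫‖ ^ 2))
    (hv : ∀ x : H, Summable (fun i => ⟪f i, x⟫ • f i)) (x : H) :
    HasSum (fun i => ⟪f i, x⟫ • f i) (frameOp f hB hub hsum hv x) := (hv x).hasSum

lemma frameOp_inner (hB : 0 < B)
    (hub : ∀ x : H, ∑' i, ‖⟪f i, x⟫‖ ^ 2 ≤ B * ‖x‖ ^ 2)
    (hsum : ∀ x : H, Summable (fun i => ‖⟪f i, x⟫‖ ^ 2))
    (hv : ∀ x : H, Summable (fun i => ⟪f i, x⟫ • f i)) (x y : H) :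
    HasSum (fun i => ⟪f i, x⟫ * ⟪y, f i⟫) ⟪y, frameOp f hB hub hsum hv x⟫ := by
  simpa [inner_smul_right] using (frameOp_hasSum hB hub hsum hv x).mapL (innerSL ℂ y)

lemma frameOp_re_inner_self (hB : 0 < B)
    (hub : ∀ x : H, ∑' i, ‖⟪f i, x⟫‖ ^ 2 ≤ B * ‖x‖ ^ 2)
    (hsum : ∀ x : H, Summable (fun i => ‖⟪f i, x⟫‖ ^ 2))
    (hv : ∀ x : H, Summable (fun i => ⟪f i, x⟫ • f i)) (x : H) :
    HasSum (fun i => ‖⟪f i, x⟫‖ ^ 2) (Complex.re ⟪x, frameOp f hB hub hsum hv x⟫) := by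
  have h := (frameOp_inner hB hub hsum hv x x).mapL Complex.reCLM
  have he : ∀ i : ℕ, Complex.reCLM (⟪f i, x⟫ * ⟪x, f i⟫) = ‖⟪f i, x⟫‖ ^ 2 := by
    intro i
    rw [← inner_conj_symm x (f i), RCLike.mul_conj]
    simp [← Complex.ofReal_pow]
  simpa [he] using h

lemma frameOp_lower (hA : 0 < A) (hB : 0 < B)
    (hlb : ∀ x : H, A * ‖x‖ ^ 2 ≤ ∑' i, ‖⟪f i, x⟫‖ ^ 2)
    (hub : ∀ x : H, ∑' i, ‖⟪f i, x⟫‖ ^ 2 ≤ B * ‖x‖ ^ 2)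
    (hsum : ∀ x : H, Summable (fun i => ‖⟪f i, x⟫‖ ^ 2))
    (hv : ∀ x : H, Summable (fun i => ⟪f i, x⟫ • f i)) (x : H) :
    A * ‖x‖ ^ 2 ≤ Complex.re ⟪x, frameOp f hB hub hsum hv x⟫ := by
  rw [← (frameOp_re_inner_self hB hub hsum hv x).tsum_eq]
  exact hlb x

lemma frame_dual_exists (f : ℕ → H) (A B : ℝ) (hA : 0 < A) (hB : 0 < B)
    (hfr : ∀ x : H, A * ‖x‖ ^ 2 ≤ ∑' i, ‖⟪f i, x⟫‖ ^ 2 ∧ ∑' i, ‖⟪f i, x⟫‖ ^ 2 ≤ B * ‖x‖ ^ 2) :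
    ∃ y : ℕ → H, ∀ x : H, HasSum (fun i => ⟪y i, x⟫ • f i) x := by
  have hlb := fun x => (hfr x).1
  have hub := fun x => (hfr x).2
  have hsum := aux_coeff_summable hA hlb
  have hv := aux_vec_summable hB hub hsum
  set S := frameOp f hB hub hsum hv with hSdef
  have hlow : ∀ x : H, A * ‖x‖ ≤ ‖S x‖ := by
    intro x
    by_cases hx : x = 0
    · simp [hx]
    have h1 := frameOp_lower hA hB hlb hub hsum hv x
    have h2 : Complex.re ⟪x, S x⟫ ≤ ‖x‖ * ‖S x‖ :=
      le_trans (Complex.re_le_norm _)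
        (le_trans le_rfl (norm_inner_le_norm x _))
    have hxpos : (0:ℝ) < ‖x‖ := norm_pos_iff.mpr hx
    nlinarith
  have hker : LinearMap.ker (S : H →ₗ[ℂ] H) = ⊥ := by
    rw [LinearMap.ker_eq_bot']
    intro x hx
    have h := hlow x
    rw [show S x = 0 from hx, norm_zero] at h
    have : ‖x‖ ≤ 0 := by nlinarith [norm_nonneg x]
    exact norm_le_zero_iff.mp this
  have hanti : AntilipschitzWith (⟨A, hA.le⟩ : NNReal)⁻¹ S := by
    apply ContinuousLinearMap.antilipschitz_of_bound
    intro x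
    show ‖x‖ ≤ A⁻¹ * ‖S x‖
    calc ‖x‖ = A⁻¹ * (A * ‖x‖) := by field_simp
      _ ≤ A⁻¹ * ‖S x‖ := mul_le_mul_of_nonneg_left (hlow x) (inv_nonneg.mpr hA.le)
  have hclosed : IsClosed ((LinearMap.range (S : H →ₗ[ℂ] H) : Submodule ℂ H) : Set H) := by
    have h := hanti.isClosed_range S.uniformContinuous
    rwa [LinearMap.coe_range]
  have horth : (LinearMap.range (S : H →ₗ[ℂ] H) : Submodule ℂ H)ᗮ = ⊥ := by
    rw [Submodule.eq_bot_iff]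
    intro y hy
    rw [Submodule.mem_orthogonal] at hy
    have h0 : (⟪S y, y⟫ : ℂ) = 0 := hy (S y) ⟨y, rfl⟩
    have h1 := frameOp_lower hA hB hlb hub hsum hv y
    have h2 : (⟪y, S y⟫ : ℂ) = (starRingEnd ℂ) ⟪S y, y⟫ := (inner_conj_symm _ _).symm
    rw [h2, h0, map_zero] at h1
    simp only [Complex.zero_re] at h1
    by_contra hne
    have hpos : (0:ℝ) < ‖y‖ := norm_pos_iff.mpr hne
    nlinarith [mul_pos hA (pow_pos hpos 2)]
  have hrange : LinearMap.range (S : H →ₗ[ℂ] H) = ⊤ := by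
    rw [← IsClosed.submodule_topologicalClosure_eq hclosed]
    exact Submodule.topologicalClosure_eq_top_iff.mpr horth
  let e := ContinuousLinearEquiv.ofBijective S hker hrange
  refine ⟨fun i => ContinuousLinearMap.adjoint (e.symm : H →L[ℂ] H) (f i), fun x => ?_⟩
  have hx : S (e.symm x) = x := e.apply_symm_apply x
  have h := frameOp_hasSum hB hub hsum hv (e.symm x)
  rw [← hSdef, hx] at h
  simpa [ContinuousLinearMap.adjoint_inner_left] using h

end AuxFrame

/-- If some rescaling  of  is a frame, then  is an unconditional
Schauder frame. -/
theorem stmt6 (H : Type*) [NormedAddCommGroup H] [InnerProductSpace ℂ H]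
    [CompleteSpace H] [TopologicalSpace.SeparableSpace H]
    (hinf : ¬ FiniteDimensional ℂ H)
    (x : ℕ → H) (c : ℕ → ℂ) (hc : IsFrame (fun n => c n • x n)) :
    IsUnconditionalSchauderFrame x := by
  obtain ⟨A, B, hA, hB, hfr⟩ := hc
  obtain ⟨y, hy⟩ := frame_dual_exists (fun n => c n • x n) A B hA hB hfr
  refine ⟨fun i => (starRingEnd ℂ) (c i) • y i, fun z => ?_⟩
  have h := hy z
  convert h using 1
  funext i
  simp [inner_smul_left, smul_smul, mul_comm]
end
end

section
/- Let H be an infinite-dimensional separable complex Hilbert space, let (xₙ)ₙ≥1 be a frame for H, and let (yₙ)ₙ≥1 be a sequence in H with M := supₙ ‖yₙ‖ < ∞ such that x = Σₙ ⟨x, yₙ⟩ xₙ with unconditional convergence for every x ∈ H. Let (Kₙ)ₙ≥1 be positive integers, and for each n ≥ 1 let z_{n,1}, …, z_{n,Kₙ} ∈ H satisfy ‖z_{n,i} − xₙ‖ ≤ (2^{2n} M)^{−1} for all 1 ≤ i ≤ Kₙ. Then the map S : H → H defined by S(x) = Σₙ Σ_{i=1}^{Kₙ} ⟨x, Kₙ^{−1}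 yₙ⟩ z_{n,i} is a well-defined bounded linear operator (the series converging unconditionally in norm for every x) satisfying ‖S − Id‖ < 1, hence S is invertible; consequently the doubly-indexed family (z_{n,i})_{n≥1, 1≤i≤Kₙ} is an unconditional Schauder frame for H, with coefficient functionals ((S^{−1})* (Kₙ^{−1} yₙ))_{n≥1, 1≤i≤Kₙ}. -/
open scoped ComplexInnerProductSpace

noncomputable section

section auxgeo
variable {E : Type*} [NormedAddCommGroup E] [NormedSpace ℝ E]

lemma aux_sum_bound {ι : Type*} (a : ι → E) (r : ℝ) (s : Finset ι) :
    ∀ (v : E) (c : ι → ℝ), (∀ n ∈ s, c n ∈ Set.Icc (0:ℝ) 1) →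
    (∀ A ⊆ s, ‖v + ∑ n ∈ A, a n‖ ≤ r) → ‖v + ∑ n ∈ s, c n • a n‖ ≤ r := by
  classical
  induction s using Finset.induction with
  | empty => intro v c _ hA; simpa using hA ∅ (by simp)
  | @insert m s hm ih =>
      intro v c hc hA
      obtain ⟨hc0, hc1⟩ := hc m (Finset.mem_insert_self m s)
      have h1 : ‖v + ∑ n ∈ s, c n • a n‖ ≤ r :=
        ih v c (fun n hn => hc n (Finset.mem_insert_of_mem hn))
          (fun A hAs => hA A (hAs.trans (Finset.subset_insert m s)))
      have h2 : ‖(v + a m) + ∑ n ∈ s, c n • a n‖ ≤ r := by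
        refine ih (v + a m) c (fun n hn => hc n (Finset.mem_insert_of_mem hn)) (fun A hAs => ?_)
        have hmA : m ∉ A := fun h => hm (hAs h)
        have : (v + a m) + ∑ n ∈ A, a n = v + ∑ n ∈ insert m A, a n := by
          rw [Finset.sum_insert hmA]; abel
        rw [this]
        exact hA _ (Finset.insert_subset_insert m hAs)
      have key : v + ∑ n ∈ insert m s, c n • a n
          = (1 - c m) • (v + ∑ n ∈ s, c n • a n)
            + c m • ((v + a m) + ∑ n ∈ s, c n • a n) := by
        rw [Finset.sum_insert hm]
        module
      rw [key]
      calc ‖(1 - c m) • (v + ∑ n ∈ s, c n • a n) + c m • ((v + a m) + ∑ n ∈ s, c n • a n)‖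
          ≤ (1 - c m) * ‖v + ∑ n ∈ s, c n • a n‖ + c m * ‖(v + a m) + ∑ n ∈ s, c n • a n‖ := by
            refine (norm_add_le _ _).trans ?_
            rw [norm_smul, norm_smul, Real.norm_of_nonneg (by linarith), Real.norm_of_nonneg hc0]
        _ ≤ (1 - c m) * r + c m * r := by
            have := mul_le_mul_of_nonneg_left h1 (by linarith : (0:ℝ) ≤ 1 - c m)
            have := mul_le_mul_of_nonneg_left h2 hc0
            nlinarith
        _ = r := by ring

lemma aux_summable_sigma [CompleteSpace E] {K : ℕ → ℕ} (hK : ∀ n, 0 < K n)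
    {a : ℕ → E} (ha : Summable a) :
    Summable (fun p : Σ n : ℕ, Fin (K n) => (K p.1 : ℝ)⁻¹ • a p.1) := by
  classical
  rw [summable_iff_vanishing]
  intro e he
  obtain ⟨ε, hε, hball⟩ := Metric.mem_nhds_iff.mp he
  obtain ⟨s, hs⟩ := (summable_iff_vanishing.mp ha) (Metric.ball 0 (ε/2))
    (Metric.ball_mem_nhds 0 (by positivity))
  refine ⟨s.sigma (fun _ => Finset.univ), fun t ht => ?_⟩
  apply hball
  rw [Metric.mem_ball, dist_zero_right]
  have hsum : ∑ p ∈ t, (K p.1 : ℝ)⁻¹ • a p.1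
      = ∑ n ∈ t.image Sigma.fst,
          ((((t.filter (fun p => p.1 = n)).card : ℝ) * (K n : ℝ)⁻¹) • a n) := by
    rw [← Finset.sum_fiberwise_of_maps_to (fun p hp => Finset.mem_image_of_mem Sigma.fst hp)
      (fun p : Σ n : ℕ, Fin (K n) => (K p.1 : ℝ)⁻¹ • a p.1)]
    refine Finset.sum_congr rfl fun n _ => ?_
    have hinner : ∑ p ∈ t.filter (fun p => p.1 = n), (K p.1 : ℝ)⁻¹ • a p.1
        = ∑ _p ∈ t.filter (fun p => p.1 = n), (K n : ℝ)⁻¹ • a n :=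
      Finset.sum_congr rfl (fun p hp => by rw [(Finset.mem_filter.mp hp).2])
    rw [hinner, Finset.sum_const, ← Nat.cast_smul_eq_nsmul ℝ, smul_smul]
  rw [hsum]
  have hbound : ∀ A ⊆ t.image Sigma.fst, ‖(0:E) + ∑ n ∈ A, a n‖ ≤ ε/2 := by
    intro A hA
    rw [zero_add]
    have hdisj : Disjoint A s := by
      rw [Finset.disjoint_left]
      intro n hnA hns
      obtain ⟨p, hpt, hpn⟩ := Finset.mem_image.mp (hA hnA)
      exact (Finset.disjoint_left.mp ht) hpt
        (Finset.mem_sigma.mpr ⟨hpn ▸ hns, Finset.mem_univ _⟩)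
    have := hs A hdisj
    rw [Metric.mem_ball, dist_zero_right] at this
    exact this.le
  have hc : ∀ n ∈ t.image Sigma.fst,
      (((t.filter (fun p => p.1 = n)).card : ℝ) * (K n : ℝ)⁻¹) ∈ Set.Icc (0:ℝ) 1 := by
    intro n _
    have hcard : (t.filter (fun p => p.1 = n)).card ≤ K n := by
      have hsub : t.filter (fun p => p.1 = n)
          ⊆ (Finset.univ : Finset (Fin (K n))).map (Function.Embedding.sigmaMk n) := by
        intro p hp
        obtain ⟨m, i⟩ := p
        have h := (Finset.mem_filter.mp hp).2
        dsimp at h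
        subst h
        simp [Finset.mem_map]
      simpa using Finset.card_le_card hsub
    constructor
    · positivity
    · calc ((t.filter (fun p => p.1 = n)).card : ℝ) * (K n : ℝ)⁻¹
          ≤ (K n : ℝ) * (K n : ℝ)⁻¹ := by
            apply mul_le_mul_of_nonneg_right (by exact_mod_cast hcard) (by positivity)
        _ = 1 := mul_inv_cancel₀ (by exact_mod_cast (hK n).ne')
  have := aux_sum_bound a (ε/2) (t.image Sigma.fst) 0 _ hc hbound
  rw [zero_add] at this
  exact lt_of_le_of_lt this (by linarith)

lemma aux_hasSum_sigma [CompleteSpace E] {K : ℕ → ℕ} (hK : ∀ n, 0 < K n)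
    {a : ℕ → E} {v : E} (ha : HasSum a v) :
    HasSum (fun p : Σ n : ℕ, Fin (K n) => (K p.1 : ℝ)⁻¹ • a p.1) v := by
  refine HasSum.sigma_of_hasSum ha (fun n => ?_) (aux_summable_sigma hK ha.summable)
  have h := hasSum_fintype (fun _ : Fin (K n) => (K n : ℝ)⁻¹ • a n)
  have heq : ∑ _i : Fin (K n), (K n : ℝ)⁻¹ • a n = a n := by
    rw [Finset.sum_const, ← Nat.cast_smul_eq_nsmul ℝ, smul_smul]
    simp [mul_inv_cancel₀ (by exact_mod_cast (hK n).ne' : (K n : ℝ) ≠ 0)]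
  rwa [heq] at h

end auxgeo

set_option maxHeartbeats 1000000 in
/-- Perturbation of a frame reconstruction by duplicated nearby vectors.
Here `x n`, `y n`, `z n i` stand for the paper's `x_{n+1}`, `y_{n+1}`, `z_{n+1,i}`
(so indices run over `n ≥ 1`).  If `(xₙ)` is a frame, `M = supₙ ‖yₙ‖ < ∞`, the `yₙ` give an
unconditional reconstruction, and each `z_{n,i}` (`1 ≤ i ≤ Kₙ`) satisfies
`‖z_{n,i} − xₙ‖ ≤ (2^{2n} M)⁻¹`, then `S x = Σₙ Σᵢ ⟪Kₙ⁻¹ yₙ, x⟫ z_{n,i}` is a well-defined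
bounded operator with `‖S − Id‖ < 1`, hence invertible, and `(z_{n,i})` is an unconditional
Schauder frame with (nonzero) coefficient functionals `(S⁻¹)* (Kₙ⁻¹ yₙ)`. -/
theorem stmt10 (H : Type*) [NormedAddCommGroup H] [InnerProductSpace ℂ H]
    [CompleteSpace H] [TopologicalSpace.SeparableSpace H]
    (hinf : ¬ FiniteDimensional ℂ H)
    (x : ℕ → H) (hx : IsFrame x)
    (y : ℕ → H) (hbd : BddAbove (Set.range fun n => ‖y n‖))
    (M : ℝ) (hM : M = ⨆ n, ‖y n‖)
    (hrec : ∀ v : H, HasSum (fun n => ⟪y n, v⟫ • x n) v)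
    (K : ℕ → ℕ) (hK : ∀ n, 0 < K n)
    (z : (n : ℕ) → Fin (K n) → H)
    (hz : ∀ (n : ℕ) (i : Fin (K n)), ‖z n i - x n‖ ≤ ((2 : ℝ) ^ (2 * (n + 1)) * M)⁻¹) :
    ∃ S : H ≃L[ℂ] H,
      (∀ v : H, HasSum
        (fun p : Σ n : ℕ, Fin (K n) =>
          (((K p.1 : ℂ))⁻¹ * ⟪y p.1, v⟫) • z p.1 p.2) ((S : H →L[ℂ] H) v)) ∧
      ‖(S : H →L[ℂ] H) - 1‖ < 1 ∧
      ∀ v : H, HasSum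
        (fun p : Σ n : ℕ, Fin (K n) =>
          ⟪ContinuousLinearMap.adjoint ((S.symm : H ≃L[ℂ] H) : H →L[ℂ] H)
              (((K p.1 : ℂ))⁻¹ • y p.1), v⟫ • z p.1 p.2) v := by
  -- `M` is positive
  have hyM : ∀ n, ‖y n‖ ≤ M := fun n => hM ▸ le_ciSup hbd n
  have hM0 : 0 ≤ M := le_trans (norm_nonneg (y 0)) (hyM 0)
  have hMpos : 0 < M := by
    rcases hM0.lt_or_eq with h | h
    · exact h
    · exfalso
      have hy : ∀ n, y n = 0 := fun n =>
        norm_le_zero_iff.mp (le_trans (hyM n) h.ge)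
      have hzero : ∀ v : H, v = 0 := by
        intro v
        have h0 := hrec v
        simp only [hy, inner_zero_left, zero_smul] at h0
        exact (h0.unique hasSum_zero)
      have : Subsingleton H := ⟨fun a b => by rw [hzero a, hzero b]⟩
      exact hinf inferInstance
  -- coefficient rewriting
  have hcoe : ∀ (w : ℂ) (n : ℕ) (u : H), ((K n : ℂ)⁻¹ * w) • u = (K n : ℝ)⁻¹ • (w • u) := by
    intro w n u
    rw [mul_smul, RCLike.real_smul_eq_coe_smul (K := ℂ)]
    congr 1; push_cast; ring
  -- the `x`-part has sum `v`
  have hf : ∀ v : H, HasSum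
      (fun p : Σ n : ℕ, Fin (K n) => ((K p.1 : ℂ)⁻¹ * ⟪y p.1, v⟫) • x p.1) v := by
    intro v
    have := aux_hasSum_sigma (E := H) hK (hrec v)
    simpa only [hcoe] using this
  -- norm bound on the perturbation terms
  have hpow : ∀ n : ℕ, ((2:ℝ) ^ (2 * (n + 1)))⁻¹ = ((4:ℝ)⁻¹) ^ (n+1) := by
    intro n; rw [pow_mul, ← inv_pow]; norm_num
  have hgbd : ∀ (v : H) (p : Σ n : ℕ, Fin (K n)),
      ‖((K p.1 : ℂ)⁻¹ * ⟪y p.1, v⟫) • (z p.1 p.2 - x p.1)‖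
        ≤ (K p.1 : ℝ)⁻¹ • (((4:ℝ)⁻¹) ^ (p.1+1) * ‖v‖) := by
    intro v ⟨n, i⟩
    rw [smul_eq_mul]
    have h1 : ‖((K n : ℂ)⁻¹ * ⟪y n, v⟫) • (z n i - x n)‖
        = (K n : ℝ)⁻¹ * ‖⟪y n, v⟫‖ * ‖z n i - x n‖ := by
      rw [norm_smul, norm_mul, norm_inv]
      simp [mul_assoc]
    rw [h1]
    have h2 : ‖⟪y n, v⟫‖ ≤ M * ‖v‖ :=
      le_trans (norm_inner_le_norm _ _) (by
        exact mul_le_mul_of_nonneg_right (hyM n) (norm_nonneg v))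
    have h3 : ‖z n i - x n‖ ≤ ((2:ℝ) ^ (2 * (n + 1)) * M)⁻¹ := hz n i
    calc (K n : ℝ)⁻¹ * ‖⟪y n, v⟫‖ * ‖z n i - x n‖
        ≤ (K n : ℝ)⁻¹ * (M * ‖v‖) * ((2:ℝ) ^ (2 * (n + 1)) * M)⁻¹ := by
          apply mul_le_mul
          · exact mul_le_mul_of_nonneg_left h2 (by positivity)
          · exact h3
          · exact norm_nonneg _
          · positivity
      _ = (K n : ℝ)⁻¹ * (((4:ℝ)⁻¹) ^ (n+1) * ‖v‖) := by
          rw [mul_inv, ← hpow n,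
            show (K n : ℝ)⁻¹ * (M * ‖v‖) * (((2:ℝ) ^ (2 * (n + 1)))⁻¹ * M⁻¹)
              = (K n : ℝ)⁻¹ * (((2:ℝ) ^ (2 * (n + 1)))⁻¹ * ‖v‖) * (M * M⁻¹) by ring,
            mul_inv_cancel₀ hMpos.ne', mul_one]
  -- summability of the bound and geometric sum
  have hc_sum : ∀ v : H, HasSum (fun n => ((4:ℝ)⁻¹) ^ (n+1) * ‖v‖) ((1/3) * ‖v‖) := by
    intro v
    have h := hasSum_geometric_of_lt_one (by norm_num : (0:ℝ) ≤ 4⁻¹) (by norm_num : (4:ℝ)⁻¹ < 1)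
    have h2 := (h.mul_left (4:ℝ)⁻¹).mul_right ‖v‖
    have h3 : (4:ℝ)⁻¹ * (1 - 4⁻¹)⁻¹ * ‖v‖ = (1/3) * ‖v‖ := by norm_num
    rw [h3] at h2
    refine HasSum.congr_fun h2 fun n => ?_
    rw [← pow_succ']
  have hbnd : ∀ v : H, HasSum
      (fun p : Σ n : ℕ, Fin (K n) => (K p.1 : ℝ)⁻¹ • (((4:ℝ)⁻¹) ^ (p.1+1) * ‖v‖))
      ((1/3) * ‖v‖) := fun v => aux_hasSum_sigma hK (hc_sum v)
  -- summability of the perturbation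
  have hgsum : ∀ v : H, Summable
      (fun p : Σ n : ℕ, Fin (K n) => ((K p.1 : ℂ)⁻¹ * ⟪y p.1, v⟫) • (z p.1 p.2 - x p.1)) :=
    fun v => Summable.of_norm_bounded (hbnd v).summable (hgbd v)
  have hTnorm : ∀ v : H,
      ‖∑' p : Σ n : ℕ, Fin (K n), ((K p.1 : ℂ)⁻¹ * ⟪y p.1, v⟫) • (z p.1 p.2 - x p.1)‖
        ≤ (1/3) * ‖v‖ := fun v => tsum_of_norm_bounded (hbnd v) (hgbd v)
  -- the perturbation as a bounded operator
  let T : H →ₗ[ℂ] H :=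
    { toFun := fun v => ∑' p : Σ n : ℕ, Fin (K n),
        ((K p.1 : ℂ)⁻¹ * ⟪y p.1, v⟫) • (z p.1 p.2 - x p.1)
      map_add' := fun v w => by
        rw [← Summable.tsum_add (hgsum v) (hgsum w)]
        exact tsum_congr fun p => by rw [inner_add_right, mul_add, add_smul]
      map_smul' := fun c v => by
        have h1 := ((hgsum v).hasSum.const_smul c).tsum_eq
        rw [RingHom.id_apply, ← h1]
        refine tsum_congr fun p => ?_
        rw [inner_smul_right, smul_smul]
        congr 1
        ring }
  have hTbound : ∀ v : H, ‖T v‖ ≤ (1/3) * ‖v‖ := hTnorm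
  let Tc : H →L[ℂ] H := T.mkContinuous (1/3) hTbound
  have hTcnorm : ‖Tc‖ ≤ 1/3 := T.mkContinuous_norm_le (by norm_num) hTbound
  have hTclt : ‖-Tc‖ < 1 := by
    rw [norm_neg]; calc ‖Tc‖ ≤ 1/3 := hTcnorm
      _ < 1 := by norm_num
  let U : (H →L[ℂ] H)ˣ := Units.oneSub (-Tc) hTclt
  let S : H ≃L[ℂ] H := ContinuousLinearEquiv.ofUnit U
  have hScoe : (S : H →L[ℂ] H) = 1 + Tc := by
    show (U : H →L[ℂ] H) = 1 + Tc
    rw [Units.val_oneSub, sub_neg_eq_add]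
  have hTc_apply : ∀ v : H, Tc v = ∑' p : Σ n : ℕ, Fin (K n),
      ((K p.1 : ℂ)⁻¹ * ⟪y p.1, v⟫) • (z p.1 p.2 - x p.1) := fun v => rfl
  -- first bullet
  have hbullet1 : ∀ v : H, HasSum
      (fun p : Σ n : ℕ, Fin (K n) => ((K p.1 : ℂ)⁻¹ * ⟪y p.1, v⟫) • z p.1 p.2)
      ((S : H →L[ℂ] H) v) := by
    intro v
    have hsum := (hf v).add ((hgsum v).hasSum)
    have hterm : ∀ p : Σ n : ℕ, Fin (K n),
        ((K p.1 : ℂ)⁻¹ * ⟪y p.1, v⟫) • x p.1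
          + ((K p.1 : ℂ)⁻¹ * ⟪y p.1, v⟫) • (z p.1 p.2 - x p.1)
        = ((K p.1 : ℂ)⁻¹ * ⟪y p.1, v⟫) • z p.1 p.2 := fun p => by
      rw [← smul_add]; congr 1; abel
    have hval : (S : H →L[ℂ] H) v = v + Tc v := by
      rw [hScoe]; simp
    rw [hval, hTc_apply v]
    exact hsum.congr_fun fun p => (hterm p).symm
  refine ⟨S, hbullet1, ?_, ?_⟩
  · -- norm bound
    have : (S : H →L[ℂ] H) - 1 = Tc := by rw [hScoe]; abel
    rw [this]
    calc ‖Tc‖ ≤ 1/3 := hTcnorm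
      _ < 1 := by norm_num
  · -- third bullet
    intro v
    have h1 := hbullet1 (S.symm v)
    have hco : ∀ p : Σ n : ℕ, Fin (K n),
        ⟪ContinuousLinearMap.adjoint ((S.symm : H ≃L[ℂ] H) : H →L[ℂ] H)
            (((K p.1 : ℂ))⁻¹ • y p.1), v⟫ = (K p.1 : ℂ)⁻¹ * ⟪y p.1, S.symm v⟫ := by
      intro p
      rw [ContinuousLinearMap.adjoint_inner_left, inner_smul_left]
      simp
    have hval : (S : H →L[ℂ] H) (S.symm v) = v := by
      simp
    rw [hval] at h1
    refine h1.congr_fun fun p => ?_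
    rw [hco p]
end
end

section
/- Let φ ∈ L²(ℝ^d) and let Γ ⊆ ℝ^{2d} be a countable set such that the Gabor system {M_b T_a φ : (a,b) ∈ Γ} is a frame for L²(ℝ^d). Then there exist a countable set Λ ⊆ ℝ^{2d} with upper Beurling density D⁺(Λ) = ∞ and a family (g_λ)_{λ∈Λ} of nonzero functions in L²(ℝ^d) such that every f ∈ L²(ℝ^d) satisfies f = Σ_{(a,b)∈Λ} ⟨f, g_{(a,b)}⟩ M_b T_a φ with unconditional convergence in L²(ℝ^d); i.e., {M_b T_a φ : (a,b) ∈ Λ} is an unconditional Schauder frame for L²(ℝ^d) whose coefficient functionals are all nonzero. -/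
open MeasureTheory Complex
open scoped ComplexInnerProductSpace ENNReal BigOperators

noncomputable section

abbrev Euc (d : ℕ) := EuclideanSpace ℝ (Fin d)

/-- Number of elements of a set, valued in `ℝ≥0∞` (equal to `∞` for infinite sets). -/
def setCount {α : Type*} (s : Set α) : ℝ≥0∞ := ∑' _ : s, (1 : ℝ≥0∞)

/-- Euclidean ball of radius `r` around `z` in the time-frequency plane `ℝ^d × ℝ^d ≅ ℝ^{2d}`. -/
def ball2 {d : ℕ} (z : Euc d × Euc d) (r : ℝ) : Set (Euc d × Euc d) :=
  {q | Real.sqrt (dist q.1 z.1 ^ 2 + dist q.2 z.2 ^ 2) < r}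

/-- Upper Beurling density of `Λ ⊆ ℝ^{2d}`:
`limsup_{r→∞} sup_z #(Λ ∩ B_r(z)) / |B_r(z)|`. -/
def upperBeurlingDensity2d {d : ℕ} (Λ : Set (Euc d × Euc d)) : ℝ≥0∞ :=
  Filter.limsup (fun r : ℝ =>
    ⨆ z : Euc d × Euc d, setCount (Λ ∩ ball2 z r) / volume (ball2 z r)) Filter.atTop

/-- The modulation-translation `M_b T_a φ` of a function `φ : ℝ^d → ℂ`. -/
def modTrans {d : ℕ} (φ : Euc d → ℂ) (a b : Euc d) : Euc d → ℂ :=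
  fun x => Complex.exp (2 * Real.pi * Complex.I * ((inner ℝ b x : ℝ) : ℂ)) * φ (x - a)

namespace Stmt12Aux

variable {H : Type*} [NormedAddCommGroup H] [InnerProductSpace ℂ H] [CompleteSpace H]
variable {ι : Type*}

/-- Every frame in a Hilbert space admits a dual family realizing an unconditional
Schauder frame expansion, with nonzero dual vectors at all indices where the frame
vector is nonzero. -/
theorem exists_dual (F : ι → H) {A B : ℝ} (hA : 0 < A) (hB : 0 < B)
    (hfr : ∀ x : H, A * ‖x‖ ^ 2 ≤ ∑' i, ‖⟪F i, x⟫‖ ^ 2 ∧ ∑' i, ‖⟪F i, x⟫‖ ^ 2 ≤ B * ‖x‖ ^ 2) :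
    ∃ u : ι → H, (∀ f : H, HasSum (fun i => ⟪u i, f⟫ • F i) f) ∧ ∀ i, F i ≠ 0 → u i ≠ 0 := by
  -- Step 1: square-summability of the analysis coefficients
  have hsq : ∀ x : H, Summable (fun i => ‖⟪F i, x⟫‖ ^ 2) := by
    intro x
    by_contra hns
    have h0 : ∑' i, ‖⟪F i, x⟫‖ ^ 2 = 0 := tsum_eq_zero_of_not_summable hns
    have h1 := (hfr x).1
    rw [h0] at h1
    have hx : x = 0 := by
      by_contra hx
      have : (0:ℝ) < ‖x‖ := norm_pos_iff.mpr hx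
      nlinarith [mul_pos hA (pow_pos this 2)]
    apply hns
    subst hx
    simp only [inner_zero_right, norm_zero]
    simpa using summable_zero
  -- Step 2: finite Bessel bound
  have hfin : ∀ (x : H) (s : Finset ι), ∑ i ∈ s, ‖⟪F i, x⟫‖ ^ 2 ≤ B * ‖x‖ ^ 2 := by
    intro x s
    exact (Summable.sum_le_tsum s (fun i _ => by positivity) (hsq x)).trans (hfr x).2
  -- Step 3: finite synthesis bound
  have hsynth_fin : ∀ (c : ι → ℂ) (s : Finset ι),
      ‖∑ i ∈ s, c i • F i‖ ≤ Real.sqrt B * Real.sqrt (∑ i ∈ s, ‖c i‖ ^ 2) := by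
    intro c s
    set u := ∑ i ∈ s, c i • F i with hu
    rcases eq_or_ne u 0 with h0 | h0
    · rw [h0, norm_zero]; positivity
    · have hN : (0:ℝ) < ‖u‖ := norm_pos_iff.mpr h0
      set a := ∑ i ∈ s, ‖c i‖ ^ 2 with ha
      have ha0 : 0 ≤ a := Finset.sum_nonneg fun i _ => by positivity
      have h1 : ‖u‖ ^ 2 ≤ ∑ i ∈ s, ‖c i‖ * ‖⟪F i, u⟫‖ := by
        have e1 : (⟪u, u⟫ : ℂ) = ∑ i ∈ s, ⟪c i • F i, u⟫ := by
          rw [hu, sum_inner]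
        have e2 : ‖u‖ ^ 2 ≤ ‖(⟪u, u⟫ : ℂ)‖ := by
          rw [← inner_self_eq_norm_sq (𝕜 := ℂ) u]
          exact (RCLike.re_le_norm _)
        refine e2.trans ?_
        rw [e1]
        refine (norm_sum_le _ _).trans ?_
        apply Finset.sum_le_sum
        intro i _
        rw [inner_smul_left, norm_mul, RCLike.norm_conj]
      have h2 : (∑ i ∈ s, ‖c i‖ * ‖⟪F i, u⟫‖) ^ 2 ≤ a * (B * ‖u‖ ^ 2) := by
        have hcs := Finset.sum_mul_sq_le_sq_mul_sq s (fun i => ‖c i‖) (fun i => ‖⟪F i, u⟫‖)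
        refine hcs.trans ?_
        have h3 : ∑ i ∈ s, ‖⟪F i, u⟫‖ ^ 2 ≤ B * ‖u‖ ^ 2 := hfin u s
        exact mul_le_mul_of_nonneg_left h3 ha0
      have h4 : ‖u‖ ^ 2 ≤ Real.sqrt (a * (B * ‖u‖ ^ 2)) := by
        refine h1.trans ?_
        have hnn : 0 ≤ ∑ i ∈ s, ‖c i‖ * ‖⟪F i, u⟫‖ :=
          Finset.sum_nonneg fun i _ => mul_nonneg (norm_nonneg _) (norm_nonneg _)
        calc ∑ i ∈ s, ‖c i‖ * ‖⟪F i, u⟫‖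
            = Real.sqrt ((∑ i ∈ s, ‖c i‖ * ‖⟪F i, u⟫‖)^2) := (Real.sqrt_sq hnn).symm
          _ ≤ _ := Real.sqrt_le_sqrt (by linarith [h2])
      have h5 : Real.sqrt (a * (B * ‖u‖ ^ 2)) = Real.sqrt a * Real.sqrt B * ‖u‖ := by
        rw [Real.sqrt_mul ha0, Real.sqrt_mul hB.le, Real.sqrt_sq (norm_nonneg u)]
        ring
      rw [h5] at h4
      have h6 : ‖u‖ * ‖u‖ ≤ Real.sqrt a * Real.sqrt B * ‖u‖ := by nlinarith
      have h7 : ‖u‖ ≤ Real.sqrt a * Real.sqrt B := le_of_mul_le_mul_right (by linarith [h6]) hN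
      linarith [h7]
  -- Step 4: synthesis summability
  have hsynth : ∀ c : ι → ℂ, Summable (fun i => ‖c i‖ ^ 2) → Summable (fun i => c i • F i) := by
    intro c hc
    rw [summable_iff_vanishing]
    intro e he
    obtain ⟨ε, hε, hball⟩ := Metric.mem_nhds_iff.mp he
    set δ := (ε / (Real.sqrt B + 1)) ^ 2 with hδ
    have hδpos : 0 < δ := by positivity
    obtain ⟨s, hs⟩ := summable_iff_vanishing.mp hc (Metric.ball 0 δ) (Metric.ball_mem_nhds 0 hδpos)
    refine ⟨s, fun t ht => hball ?_⟩
    have h1 : ∑ i ∈ t, ‖c i‖ ^ 2 < δ := by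
      have := hs t ht
      rw [Metric.mem_ball, dist_zero_right, Real.norm_eq_abs] at this
      exact (le_abs_self _).trans_lt this
    rw [Metric.mem_ball, dist_zero_right]
    have h2 : ‖∑ i ∈ t, c i • F i‖ ≤ Real.sqrt B * Real.sqrt δ := by
      refine (hsynth_fin c t).trans ?_
      exact mul_le_mul_of_nonneg_left (Real.sqrt_le_sqrt h1.le) (Real.sqrt_nonneg _)
    have h3 : Real.sqrt δ = ε / (Real.sqrt B + 1) := Real.sqrt_sq (by positivity)
    have h4 : Real.sqrt B * (ε / (Real.sqrt B + 1)) < ε := by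
      have hpos : (0:ℝ) < Real.sqrt B + 1 := by positivity
      rw [mul_div_assoc', div_lt_iff₀ hpos]
      nlinarith [hε, Real.sqrt_nonneg B]
    calc ‖∑ i ∈ t, c i • F i‖ ≤ Real.sqrt B * Real.sqrt δ := h2
      _ = Real.sqrt B * (ε / (Real.sqrt B + 1)) := by rw [h3]
      _ < ε := h4
  -- Step 5: the frame operator
  have hSsum : ∀ x : H, Summable (fun i => (⟪F i, x⟫ : ℂ) • F i) := fun x => hsynth _ (hsq x)
  set S : H → H := fun x => ∑' i, (⟪F i, x⟫ : ℂ) • F i with hSdef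
  have hS : ∀ x : H, HasSum (fun i => (⟪F i, x⟫ : ℂ) • F i) (S x) := fun x => (hSsum x).hasSum
  -- Step 6: inner-product formula
  have hinnerHS : ∀ x y : H, HasSum (fun i => (⟪F i, x⟫ : ℂ) * ⟪y, F i⟫) ⟪y, S x⟫ := by
    intro x y
    have h := (innerSL ℂ y).hasSum (hS x)
    simpa only [innerSL_apply_apply, inner_smul_right] using h
  -- Step 7: symmetry
  have hsym : ∀ x y : H, (⟪S x, y⟫ : ℂ) = ⟪x, S y⟫ := by
    intro x y
    have h1 := (hinnerHS x y).star
    have h2 : HasSum (fun i => (⟪x, F i⟫ : ℂ) * ⟪F i, y⟫) ⟪S x, y⟫ := by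
      have e : ∀ i, star ((⟪F i, x⟫ : ℂ) * ⟪y, F i⟫) = (⟪x, F i⟫ : ℂ) * ⟪F i, y⟫ := by
        intro i
        simp only [star_mul', RCLike.star_def, inner_conj_symm]
      have e2 : star (⟪y, S x⟫ : ℂ) = ⟪S x, y⟫ := by
        rw [← inner_conj_symm (S x) y]; rfl
      simpa only [Function.comp, e, e2] using h1
    have h3 := hinnerHS y x
    have h4 : HasSum (fun i => (⟪x, F i⟫ : ℂ) * ⟪F i, y⟫) ⟪x, S y⟫ := by
      simpa only [mul_comm] using h3
    exact h2.unique h4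
  -- Step 8: lower bound
  have hlow1 : ∀ x : H, (⟪x, S x⟫ : ℂ) = ((∑' i, ‖⟪F i, x⟫‖ ^ 2 : ℝ) : ℂ) := by
    intro x
    have h1 := hinnerHS x x
    have h2 : HasSum (fun i => ((‖⟪F i, x⟫‖ ^ 2 : ℝ) : ℂ)) ⟪x, S x⟫ := by
      have e : ∀ i, (⟪F i, x⟫ : ℂ) * ⟪x, F i⟫ = ((‖⟪F i, x⟫‖ ^ 2 : ℝ) : ℂ) := by
        intro i
        rw [← inner_conj_symm x (F i), Complex.mul_conj, Complex.normSq_eq_norm_sq]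
      simpa only [e] using h1
    have h3 : HasSum (fun i => ((‖⟪F i, x⟫‖ ^ 2 : ℝ) : ℂ)) ((∑' i, ‖⟪F i, x⟫‖ ^ 2 : ℝ) : ℂ) :=
      Complex.hasSum_ofReal.mpr (hsq x).hasSum
    exact h2.unique h3
  have hlow : ∀ x : H, ‖x‖ ≤ A⁻¹ * ‖S x‖ := by
    intro x
    rcases eq_or_ne x 0 with h0 | h0
    · simp [h0]; positivity
    · have hx : (0:ℝ) < ‖x‖ := norm_pos_iff.mpr h0
      have h1 : A * ‖x‖ ^ 2 ≤ ‖(⟪x, S x⟫ : ℂ)‖ := by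
        rw [hlow1 x]
        rw [Complex.norm_real, Real.norm_eq_abs]
        exact (hfr x).1.trans (le_abs_self _)
      have h2 : ‖(⟪x, S x⟫ : ℂ)‖ ≤ ‖x‖ * ‖S x‖ := norm_inner_le_norm x (S x)
      have h3 : A * ‖x‖ ≤ ‖S x‖ := by
        have := h1.trans h2
        rw [pow_two] at this
        have := le_of_mul_le_mul_right (by linarith : A * ‖x‖ * ‖x‖ ≤ ‖S x‖ * ‖x‖) hx
        linarith
      calc ‖x‖ = A⁻¹ * (A * ‖x‖) := by field_simp
        _ ≤ A⁻¹ * ‖S x‖ := mul_le_mul_of_nonneg_left h3 (by positivity)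
  -- Step 9: linearity
  have hadd : ∀ x y : H, S (x + y) = S x + S y := by
    intro x y
    refine (hS (x + y)).unique ?_
    have h := (hS x).add (hS y)
    have e : ∀ i, (⟪F i, x + y⟫ : ℂ) • F i = (⟪F i, x⟫ : ℂ) • F i + (⟪F i, y⟫ : ℂ) • F i := by
      intro i; rw [inner_add_right, add_smul]
    simpa only [e] using h
  have hsmul : ∀ (a : ℂ) (x : H), S (a • x) = a • S x := by
    intro a x
    refine (hS (a • x)).unique ?_
    have h := (hS x).const_smul a
    have e : ∀ i, (⟪F i, a • x⟫ : ℂ) • F i = a • ((⟪F i, x⟫ : ℂ) • F i) := by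
      intro i; rw [inner_smul_right, mul_smul]
    simpa only [e] using h
  -- Step 10: upper bound
  have hub : ∀ x : H, ‖S x‖ ≤ B * ‖x‖ := by
    intro x
    have h1 : ∀ s : Finset ι, ‖∑ i ∈ s, (⟪F i, x⟫ : ℂ) • F i‖ ≤ B * ‖x‖ := by
      intro s
      refine (hsynth_fin _ s).trans ?_
      have h2 : Real.sqrt (∑ i ∈ s, ‖⟪F i, x⟫‖ ^ 2) ≤ Real.sqrt (B * ‖x‖ ^ 2) :=
        Real.sqrt_le_sqrt (hfin x s)
      have h3 : Real.sqrt (B * ‖x‖ ^ 2) = Real.sqrt B * ‖x‖ := by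
        rw [Real.sqrt_mul hB.le, Real.sqrt_sq (norm_nonneg x)]
      calc Real.sqrt B * Real.sqrt (∑ i ∈ s, ‖⟪F i, x⟫‖ ^ 2)
          ≤ Real.sqrt B * (Real.sqrt B * ‖x‖) := by
            rw [← h3]; exact mul_le_mul_of_nonneg_left h2 (Real.sqrt_nonneg _)
        _ = B * ‖x‖ := by rw [← mul_assoc, Real.mul_self_sqrt hB.le]
    have h4 : Filter.Tendsto (fun s : Finset ι => ‖∑ i ∈ s, (⟪F i, x⟫ : ℂ) • F i‖)
        Filter.atTop (nhds ‖S x‖) := (hS x).norm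
    exact le_of_tendsto h4 (Filter.Eventually.of_forall h1)
  -- Step 11: the frame operator as a continuous linear map
  set Slin : H →ₗ[ℂ] H := { toFun := S, map_add' := hadd, map_smul' := hsmul } with hSlin
  set S' : H →L[ℂ] H := LinearMap.mkContinuous Slin B (by intro x; exact hub x) with hS'
  -- Step 12: surjectivity
  have antilip : AntilipschitzWith ⟨A⁻¹, inv_nonneg.mpr hA.le⟩ S' := by
    apply ContinuousLinearMap.antilipschitz_of_bound
    intro x
    exact hlow x
  have hclosed : IsClosed (Set.range S') := antilip.isClosed_range S'.uniformContinuous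
  set V : Submodule ℂ H := LinearMap.range (S' : H →ₗ[ℂ] H) with hV
  have hVset : (V : Set H) = Set.range S' := by
    ext w; simp [hV, LinearMap.mem_range]
  haveI : CompleteSpace V := by
    rw [← hVset] at hclosed
    exact hclosed.completeSpace_coe
  have horth : Vᗮ = ⊥ := by
    rw [Submodule.eq_bot_iff]
    intro g hg
    have h0 : (⟪S' g, g⟫ : ℂ) = 0 :=
      (Submodule.mem_orthogonal V g).mp hg (S' g) (LinearMap.mem_range_self _ g)
    have h1 : (⟪g, S g⟫ : ℂ) = 0 := by
      rw [← hsym g g]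
      exact h0
    have h2 : ((∑' i, ‖⟪F i, g⟫‖ ^ 2 : ℝ) : ℂ) = 0 := by rw [← hlow1 g]; exact h1
    have h3 : (∑' i, ‖⟪F i, g⟫‖ ^ 2 : ℝ) = 0 := by exact_mod_cast h2
    have h4 := (hfr g).1
    rw [h3] at h4
    by_contra hg0
    have : (0:ℝ) < ‖g‖ := norm_pos_iff.mpr hg0
    nlinarith [mul_pos hA (pow_pos this 2)]
  have hVtop : V = ⊤ := Submodule.orthogonal_eq_bot_iff.mp horth
  have hsurj : ∀ w : H, ∃ x : H, S x = w := by
    intro w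
    have hw : w ∈ V := by rw [hVtop]; trivial
    obtain ⟨x, hx⟩ := LinearMap.mem_range.mp hw
    exact ⟨x, hx⟩
  -- Step 13: conclusion
  refine ⟨fun i => Classical.choose (hsurj (F i)), ?_, ?_⟩
  · intro f
    obtain ⟨w, hw⟩ := hsurj f
    have h := hS w
    rw [hw] at h
    have e : (fun i => (⟪Classical.choose (hsurj (F i)), f⟫ : ℂ) • F i)
        = fun i => (⟪F i, w⟫ : ℂ) • F i := by
      funext i
      congr 1
      have hu := Classical.choose_spec (hsurj (F i))
      calc (⟪Classical.choose (hsurj (F i)), f⟫ : ℂ)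
          = ⟪Classical.choose (hsurj (F i)), S w⟫ := by rw [hw]
        _ = ⟪S (Classical.choose (hsurj (F i))), w⟫ := (hsym _ w).symm
        _ = ⟪F i, w⟫ := by rw [hu]
    rw [e]
    exact h
  · intro i hFi
    intro hu0
    have hu := Classical.choose_spec (hsurj (F i))
    have hu0' : Classical.choose (hsurj (F i)) = 0 := hu0
    rw [hu0'] at hu
    apply hFi
    rw [← hu]
    exact Slin.map_zero

/-- Pointwise, a time-frequency shift has the same absolute value as the translate. -/
theorem modTrans_norm_eq {d : ℕ} (ψ : Euc d → ℂ) (a b : Euc d) (x : Euc d) :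
    ‖modTrans ψ a b x‖ = ‖ψ (x - a)‖ := by
  show ‖Complex.exp (2 * Real.pi * Complex.I * ((inner ℝ b x : ℝ) : ℂ)) * ψ (x - a)‖ = _
  rw [norm_mul]
  have h1 : ‖Complex.exp (2 * Real.pi * Complex.I * ((inner ℝ b x : ℝ) : ℂ))‖ = 1 := by
    rw [Complex.norm_exp]
    have h2 : (2 * (Real.pi:ℂ) * Complex.I * ((inner ℝ b x : ℝ) : ℂ)).re = 0 := by
      simp [Complex.mul_re, Complex.mul_im]
    rw [h2, Real.exp_zero]
  rw [h1, one_mul]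

theorem memℒp_modTrans {d : ℕ} (φ : Lp ℂ 2 (volume : Measure (Euc d))) (a b : Euc d) :
    MemLp (modTrans (φ : Euc d → ℂ) a b) 2 volume := by
  have mp : MeasurePreserving (fun x : Euc d => x - a) volume volume :=
    measurePreserving_sub_right volume a
  constructor
  · exact ((Complex.continuous_exp.comp (continuous_const.mul
      (Complex.continuous_ofReal.comp (continuous_const.inner continuous_id)))).aestronglyMeasurable).mul
      ((Lp.aestronglyMeasurable φ).comp_measurePreserving mp)
  · rw [eLpNorm_congr_norm_ae (Filter.Eventually.of_forall (modTrans_norm_eq _ a b))]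
    rw [show (fun x => (φ : Euc d → ℂ) (x - a)) = ((φ : Euc d → ℂ) ∘ (fun x => x - a)) from rfl]
    rw [eLpNorm_comp_measurePreserving (Lp.aestronglyMeasurable φ) mp]
    exact Lp.eLpNorm_lt_top φ

theorem eLpNorm_modTrans {d : ℕ} (φ : Lp ℂ 2 (volume : Measure (Euc d))) (a b : Euc d) :
    eLpNorm (modTrans (φ : Euc d → ℂ) a b) 2 volume = eLpNorm (φ : Euc d → ℂ) 2 volume := by
  rw [eLpNorm_congr_norm_ae (Filter.Eventually.of_forall (modTrans_norm_eq _ a b))]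
  rw [show (fun x => (φ : Euc d → ℂ) (x - a)) = ((φ : Euc d → ℂ) ∘ (fun x => x - a)) from rfl]
  exact eLpNorm_comp_measurePreserving (Lp.aestronglyMeasurable φ)
    (measurePreserving_sub_right volume a)

/-- If a set contains infinitely many points in every large ball around the origin, its
upper Beurling density is infinite. -/
theorem density_top {d : ℕ} (Λ : Set (Euc d × Euc d))
    (hinf : ∀ r : ℝ, 1 ≤ r → (Λ ∩ ball2 ((0, 0) : Euc d × Euc d) r).Infinite) :
    upperBeurlingDensity2d Λ = ∞ := by
  have key : ∀ r : ℝ, 1 ≤ r →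
      (⨆ z : Euc d × Euc d, setCount (Λ ∩ ball2 z r) / volume (ball2 z r)) = ∞ := by
    intro r hr
    rw [eq_top_iff]
    refine le_trans (le_of_eq ?_)
      (le_iSup (fun z : Euc d × Euc d => setCount (Λ ∩ ball2 z r) / volume (ball2 z r))
        ((0, 0) : Euc d × Euc d))
    have hc : setCount (Λ ∩ ball2 ((0, 0) : Euc d × Euc d) r) = ∞ := by
      have hι : Infinite ↥(Λ ∩ ball2 ((0, 0) : Euc d × Euc d) r) := (hinf r hr).to_subtype
      exact ENNReal.tsum_const_eq_top_of_ne_zero one_ne_zero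
    have hv : volume (ball2 ((0, 0) : Euc d × Euc d) r) ≠ ∞ := by
      have hsub : ball2 ((0, 0) : Euc d × Euc d) r ⊆
          (Metric.ball (0 : Euc d) r) ×ˢ (Metric.ball (0 : Euc d) r) := by
        rintro ⟨q1, q2⟩ hq
        simp only [ball2, Set.mem_setOf_eq] at hq
        have key1 : ∀ s t : ℝ, 0 ≤ s → 0 ≤ t → Real.sqrt (s ^ 2 + t ^ 2) < r → s < r ∧ t < r := by
          intro s t hs ht hlt
          constructor
          · calc s = Real.sqrt (s ^ 2) := (Real.sqrt_sq hs).symm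
              _ ≤ Real.sqrt (s ^ 2 + t ^ 2) := Real.sqrt_le_sqrt (by nlinarith)
              _ < r := hlt
          · calc t = Real.sqrt (t ^ 2) := (Real.sqrt_sq ht).symm
              _ ≤ Real.sqrt (s ^ 2 + t ^ 2) := Real.sqrt_le_sqrt (by nlinarith)
              _ < r := hlt
        have h2 := key1 _ _ dist_nonneg dist_nonneg hq
        exact ⟨Metric.mem_ball.mpr h2.1, Metric.mem_ball.mpr h2.2⟩
      have hle : volume (ball2 ((0, 0) : Euc d × Euc d) r) ≤ (volume : Measure (Euc d × Euc d))
          ((Metric.ball (0 : Euc d) r) ×ˢ (Metric.ball (0 : Euc d) r)) := measure_mono hsub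
      have h2 : (volume : Measure (Euc d × Euc d))
          ((Metric.ball (0 : Euc d) r) ×ˢ (Metric.ball (0 : Euc d) r))
          = volume (Metric.ball (0 : Euc d) r) * volume (Metric.ball (0 : Euc d) r) := by
        rw [Measure.volume_eq_prod]; exact Measure.prod_prod _ _
      refine ne_top_of_le_ne_top ?_ hle
      rw [h2]
      exact ENNReal.mul_ne_top measure_ball_lt_top.ne measure_ball_lt_top.ne
    rw [hc, ENNReal.top_div_of_ne_top hv]
  unfold upperBeurlingDensity2d
  have hev : ∀ᶠ r in Filter.atTop,
      (⨆ z : Euc d × Euc d, setCount (Λ ∩ ball2 z r) / volume (ball2 z r)) = (⊤ : ℝ≥0∞) :=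
    Filter.eventually_atTop.mpr ⟨1, key⟩
  rw [Filter.limsup_congr hev]
  exact Filter.limsup_const ⊤

end Stmt12Aux

set_option maxHeartbeats 1000000 in
/-- If some Gabor system `{M_b T_a φ : (a,b) ∈ Γ}` is a frame for `L²(ℝ^d)`, then there are a
countable set `Λ ⊆ ℝ^{2d}` with infinite upper Beurling density and nonzero coefficient
functionals `(g_λ)` making `{M_b T_a φ : (a,b) ∈ Λ}` an unconditional Schauder frame. -/
theorem stmt12 {d : ℕ} (hd : 0 < d)
    (φ : Lp ℂ 2 (volume : Measure (Euc d)))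
    (Γ : Set (Euc d × Euc d)) (hΓ : Γ.Countable)
    (Gf : Γ → Lp ℂ 2 (volume : Measure (Euc d)))
    (hGf : ∀ p : Γ, (Gf p : Euc d → ℂ) =ᵐ[volume]
      modTrans (φ : Euc d → ℂ) (p : Euc d × Euc d).1 (p : Euc d × Euc d).2)
    (hframe : IsFrame Gf) :
    ∃ Λ : Set (Euc d × Euc d), Λ.Countable ∧ upperBeurlingDensity2d Λ = ∞ ∧
      ∃ (G : Λ → Lp ℂ 2 (volume : Measure (Euc d)))
        (g : Λ → Lp ℂ 2 (volume : Measure (Euc d))),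
        (∀ p : Λ, (G p : Euc d → ℂ) =ᵐ[volume]
          modTrans (φ : Euc d → ℂ) (p : Euc d × Euc d).1 (p : Euc d × Euc d).2) ∧
        (∀ p : Λ, g p ≠ 0) ∧
        ∀ f : Lp ℂ 2 (volume : Measure (Euc d)),
          HasSum (fun p : Λ => ⟪g p, f⟫ • G p) f := by
  classical
  obtain ⟨A, B, hA, hB, hfr⟩ := hframe
  -- the dual family over Γ
  obtain ⟨u, hu, hune⟩ := Stmt12Aux.exists_dual Gf hA hB hfr
  -- the Lp versions of all time-frequency shifts
  set GLp : Euc d × Euc d → Lp ℂ 2 (volume : Measure (Euc d)) :=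
    fun q => (Stmt12Aux.memℒp_modTrans φ q.1 q.2).toLp (modTrans (φ : Euc d → ℂ) q.1 q.2)
    with hGLpdef
  have hGLp_ae : ∀ q : Euc d × Euc d,
      (GLp q : Euc d → ℂ) =ᵐ[volume] modTrans (φ : Euc d → ℂ) q.1 q.2 :=
    fun q => MemLp.coeFn_toLp _
  have hGLpnorm : ∀ q : Euc d × Euc d, ‖GLp q‖ = ‖φ‖ := by
    intro q
    have h1 : ‖GLp q‖ = (eLpNorm (modTrans (φ : Euc d → ℂ) q.1 q.2) 2 volume).toReal :=
      Lp.norm_toLp (modTrans (φ : Euc d → ℂ) q.1 q.2) (Stmt12Aux.memℒp_modTrans φ q.1 q.2)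
    rw [h1, Stmt12Aux.eLpNorm_modTrans, ← Lp.norm_def]
  have hGfGLp : ∀ i : Γ, Gf i = GLp i :=
    fun i => Lp.ext ((hGf i).trans (hGLp_ae i).symm)
  have hGfnorm : ∀ i : Γ, ‖Gf i‖ = ‖φ‖ := by intro i; rw [hGfGLp i, hGLpnorm]
  -- a nonzero element of L²
  have hmem0 : MemLp ((Metric.ball (0 : Euc d) 1).indicator (fun _ => (1 : ℂ))) 2
      (volume : Measure (Euc d)) :=
    memLp_indicator_const 2 measurableSet_ball 1 (Or.inr measure_ball_lt_top.ne)
  set ψ0 : Lp ℂ 2 (volume : Measure (Euc d)) := hmem0.toLp _ with hψ0def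
  have hψ0ne : ψ0 ≠ 0 := by
    intro h
    have h2 : ((Metric.ball (0 : Euc d) 1).indicator (fun _ => (1 : ℂ)))
        =ᵐ[volume] (0 : Euc d → ℂ) := by
      refine (MemLp.toLp_eq_toLp_iff hmem0 MemLp.zero).mp ?_
      rw [MemLp.toLp_zero]
      exact h
    rw [Set.indicator_ae_eq_zero] at h2
    have h3 : Function.support (fun _ : Euc d => (1 : ℂ)) = Set.univ := by
      ext x; simp
    rw [h3, Set.inter_univ] at h2
    exact absurd h2 (Metric.measure_ball_pos volume (0 : Euc d) one_pos).ne'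
  -- φ is nonzero
  have hφne : φ ≠ 0 := by
    intro h0
    have hn : ‖φ‖ = 0 := by rw [h0, norm_zero]
    have hGf0 : ∀ i : Γ, Gf i = 0 := fun i => norm_eq_zero.mp (by rw [hGfnorm i, hn])
    have h1 := (hfr ψ0).1
    have h2 : ∑' i : Γ, ‖(⟪Gf i, ψ0⟫ : ℂ)‖ ^ 2 = 0 := by
      have he : ∀ i : Γ, ‖(⟪Gf i, ψ0⟫ : ℂ)‖ ^ 2 = 0 := by
        intro i; rw [hGf0 i, inner_zero_left]; simp
      rw [tsum_congr he, tsum_zero]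
    rw [h2] at h1
    have hp : (0:ℝ) < ‖ψ0‖ := norm_pos_iff.mpr hψ0ne
    nlinarith [mul_pos hA (pow_pos hp 2)]
  have hGfne : ∀ i : Γ, Gf i ≠ 0 := by
    intro i h
    exact hφne (norm_eq_zero.mp (by rw [← hGfnorm i, h, norm_zero]))
  have hune' : ∀ i : Γ, u i ≠ 0 := fun i => hune i (hGfne i)
  -- construction of the auxiliary cluster of points
  set e0 : Euc d := EuclideanSpace.single (⟨0, hd⟩ : Fin d) (1 : ℝ) with he0
  have he0norm : ‖e0‖ = 1 := by rw [he0, EuclideanSpace.norm_single]; norm_num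
  have he0ne : e0 ≠ 0 := by
    intro h
    rw [h, norm_zero] at he0norm
    norm_num at he0norm
  set ψmap : ℝ → Euc d × Euc d := fun t => (t • e0, 0) with hψmap
  have hψinj : Function.Injective ψmap := by
    intro s t hst
    have h1 : s • e0 = t • e0 := congrArg Prod.fst hst
    exact smul_left_injective ℝ he0ne h1
  set Sgood : Set ℝ := Set.Ioo (0:ℝ) 1 \ (ψmap ⁻¹' Γ) with hSgood
  have hSinf : Sgood.Infinite := by
    intro hfin
    have h1 : (Set.Ioo (0:ℝ) 1).Countable := by
      have hsub : Set.Ioo (0:ℝ) 1 ⊆ Sgood ∪ (ψmap ⁻¹' Γ) := by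
        intro x hx
        by_cases hxb : x ∈ ψmap ⁻¹' Γ
        · exact Or.inr hxb
        · exact Or.inl ⟨hx, hxb⟩
      exact Set.Countable.mono hsub (hfin.countable.union (hΓ.preimage hψinj))
    rw [← Cardinal.le_aleph0_iff_set_countable] at h1
    rw [Cardinal.mk_Ioo_real (by norm_num : (0:ℝ) < 1)] at h1
    exact absurd (h1.trans_lt Cardinal.aleph0_lt_continuum) (lt_irrefl _)
  set emb : ℕ ↪ ↥Sgood := hSinf.natEmbedding with hembdef
  set tseq : ℕ → ℝ := fun n => ((emb n : ↥Sgood) : ℝ) with htseq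
  have htinj : Function.Injective tseq := fun m n h => emb.injective (Subtype.ext h)
  have htmem : ∀ n, tseq n ∈ Sgood := fun n => (emb n).2
  set pseq : ℕ → Euc d × Euc d := fun n => ψmap (tseq n) with hpseqdef
  have hpinj : Function.Injective pseq := fun m n h => htinj (hψinj h)
  have hpΓ : ∀ n, pseq n ∉ Γ := fun n => (htmem n).2
  have htIoo : ∀ n, tseq n ∈ Set.Ioo (0:ℝ) 1 := fun n => (htmem n).1
  have hpball : ∀ n, pseq n ∈ ball2 ((0, 0) : Euc d × Euc d) 1 := by
    intro n
    have ht := htIoo n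
    simp only [hpseqdef, hψmap, ball2, Set.mem_setOf_eq]
    rw [dist_zero_right, dist_self, norm_smul, he0norm, mul_one, Real.norm_eq_abs,
      abs_of_pos ht.1]
    have : (0:ℝ) ^ 2 = 0 := by norm_num
    rw [this, add_zero, Real.sqrt_sq ht.1.le]
    exact ht.2
  set R : Set (Euc d × Euc d) := Set.range pseq with hRdef
  have hdisj : Disjoint Γ R := by
    rw [Set.disjoint_left]
    rintro q hqΓ ⟨n, rfl⟩
    exact hpΓ n hqΓ
  have hRinf : R.Infinite := Set.infinite_range_of_injective hpinj
  -- the geometric series and the correction vector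
  set cseq : ℕ → ℝ := fun n => (1/2 : ℝ) ^ n with hcseq
  have hcpos : ∀ n, 0 < cseq n := fun n => by positivity
  have hsumv : Summable (fun n => ((cseq n : ℝ) : ℂ) • GLp (pseq n)) := by
    apply Summable.of_norm
    have he : (fun n => ‖((cseq n : ℝ) : ℂ) • GLp (pseq n)‖)
        = fun n => (1/2 : ℝ) ^ n * ‖φ‖ := by
      funext n
      rw [norm_smul, hGLpnorm]
      congr 1
      rw [Complex.norm_real, Real.norm_eq_abs, abs_of_pos (hcpos n)]
    rw [he]
    exact summable_geometric_two.mul_right _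
  set v : Lp ℂ 2 (volume : Measure (Euc d)) := ∑' n, ((cseq n : ℝ) : ℂ) • GLp (pseq n) with hvdef
  have hv : HasSum (fun n => ((cseq n : ℝ) : ℂ) • GLp (pseq n)) v := hsumv.hasSum
  set δ : ℝ := (1 + ‖v‖ * ‖φ‖)⁻¹ with hδdef
  have hδpos : 0 < δ := by
    rw [hδdef]
    have : (0:ℝ) < 1 + ‖v‖ * ‖φ‖ := by positivity
    positivity
  have hkey : ‖v‖ * (δ * ‖φ‖) < 1 := by
    rw [hδdef, show ‖v‖ * ((1 + ‖v‖ * ‖φ‖)⁻¹ * ‖φ‖) = (‖v‖ * ‖φ‖) * (1 + ‖v‖ * ‖φ‖)⁻¹ by ring]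
    rw [← div_eq_mul_inv, div_lt_one (by positivity)]
    linarith [mul_nonneg (norm_nonneg v) (norm_nonneg φ)]
  set h0 : Lp ℂ 2 (volume : Measure (Euc d)) := ((δ : ℝ) : ℂ) • φ with hh0def
  have hδC : ((δ : ℝ) : ℂ) ≠ 0 := by exact_mod_cast hδpos.ne'
  have hh0ne : h0 ≠ 0 := smul_ne_zero hδC hφne
  have hh0norm : ‖h0‖ = δ * ‖φ‖ := by
    rw [hh0def, norm_smul]
    congr 1
    rw [Complex.norm_real, Real.norm_eq_abs, abs_of_pos hδpos]
  -- the ambient coefficient family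
  set gAmb : Euc d × Euc d → Lp ℂ 2 (volume : Measure (Euc d)) := fun q =>
    if hq : q ∈ Γ then u ⟨q, hq⟩ - (starRingEnd ℂ (⟪u ⟨q, hq⟩, v⟫ : ℂ)) • h0
    else ((cseq (Function.invFun pseq q) : ℝ) : ℂ) • h0
    with hgAmb
  refine ⟨Γ ∪ R, hΓ.union (Set.countable_range pseq), ?_, fun q => GLp q, fun q => gAmb q,
    fun q => hGLp_ae q, ?_, ?_⟩
  · -- infinite density
    apply Stmt12Aux.density_top
    intro r hr
    apply Set.Infinite.mono _ hRinf
    rintro q ⟨n, rfl⟩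
    refine ⟨Or.inr ⟨n, rfl⟩, ?_⟩
    have hb := hpball n
    simp only [ball2, Set.mem_setOf_eq] at hb ⊢
    exact hb.trans_le hr
  · -- nonvanishing of the coefficients
    rintro ⟨q, hq⟩
    show gAmb q ≠ 0
    by_cases hqΓ : q ∈ Γ
    · rw [hgAmb]
      simp only [dif_pos hqΓ]
      intro heq
      have heq2 : u ⟨q, hqΓ⟩ = (starRingEnd ℂ (⟪u ⟨q, hqΓ⟩, v⟫ : ℂ)) • h0 := by
        rwa [sub_eq_zero] at heq
      have h1 : ‖u ⟨q, hqΓ⟩‖ ≤ ‖u ⟨q, hqΓ⟩‖ * (‖v‖ * (δ * ‖φ‖)) := by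
        calc ‖u ⟨q, hqΓ⟩‖ = ‖(starRingEnd ℂ (⟪u ⟨q, hqΓ⟩, v⟫ : ℂ))‖ * ‖h0‖ := by
              rw [← norm_smul, ← heq2]
          _ = ‖(⟪u ⟨q, hqΓ⟩, v⟫ : ℂ)‖ * (δ * ‖φ‖) := by rw [RCLike.norm_conj, hh0norm]
          _ ≤ (‖u ⟨q, hqΓ⟩‖ * ‖v‖) * (δ * ‖φ‖) := by
              apply mul_le_mul_of_nonneg_right (norm_inner_le_norm _ _)
              positivity
          _ = ‖u ⟨q, hqΓ⟩‖ * (‖v‖ * (δ * ‖φ‖)) := by ring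
      have h2 : 0 < ‖u ⟨q, hqΓ⟩‖ := norm_pos_iff.mpr (hune' ⟨q, hqΓ⟩)
      nlinarith [hkey]
    · rw [hgAmb]
      simp only [dif_neg hqΓ]
      apply smul_ne_zero _ hh0ne
      exact_mod_cast (hcpos _).ne'
  · -- the expansion
    intro f
    set f' : Lp ℂ 2 (volume : Measure (Euc d)) := f - (⟪h0, f⟫ : ℂ) • v with hf'def
    have hΓsum : HasSum ((fun q : Euc d × Euc d => (⟪gAmb q, f⟫ : ℂ) • GLp q) ∘
        ((↑) : Γ → Euc d × Euc d)) f' := by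
      have h1 := hu f'
      have e : ((fun q : Euc d × Euc d => (⟪gAmb q, f⟫ : ℂ) • GLp q) ∘
          ((↑) : Γ → Euc d × Euc d)) = fun i : Γ => (⟪u i, f'⟫ : ℂ) • Gf i := by
        funext i
        show (⟪gAmb ↑i, f⟫ : ℂ) • GLp ↑i = (⟪u i, f'⟫ : ℂ) • Gf i
        rw [hGfGLp i]
        congr 1
        have hg : gAmb ↑i = u i - (starRingEnd ℂ (⟪u i, v⟫ : ℂ)) • h0 := by
          rw [hgAmb]
          simp only [dif_pos i.2]
        rw [hg, inner_sub_left, inner_smul_left, hf'def, inner_sub_right, inner_smul_right]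
        rw [Complex.conj_conj]
        ring
      rw [e]
      exact h1
    have hRsum : HasSum ((fun q : Euc d × Euc d => (⟪gAmb q, f⟫ : ℂ) • GLp q) ∘
        ((↑) : R → Euc d × Euc d)) ((⟪h0, f⟫ : ℂ) • v) := by
      have h2 := hv.const_smul (⟪h0, f⟫ : ℂ)
      have e : ((fun q : Euc d × Euc d => (⟪gAmb q, f⟫ : ℂ) • GLp q) ∘ pseq)
          = fun n => (⟪h0, f⟫ : ℂ) • (((cseq n : ℝ) : ℂ) • GLp (pseq n)) := by
        funext n
        show (⟪gAmb (pseq n), f⟫ : ℂ) • GLp (pseq n) = _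
        have hg : gAmb (pseq n) = ((cseq (Function.invFun pseq (pseq n)) : ℝ) : ℂ) • h0 := by
          rw [hgAmb]
          simp only [dif_neg (hpΓ n)]
        rw [hg, Function.leftInverse_invFun hpinj n, inner_smul_left, Complex.conj_ofReal,
          smul_smul]
        congr 1
        ring
      have h3 : HasSum ((fun q : Euc d × Euc d => (⟪gAmb q, f⟫ : ℂ) • GLp q) ∘ pseq)
          ((⟪h0, f⟫ : ℂ) • v) := by
        rw [e]
        exact h2
      exact (hpinj.hasSum_range_iff).mpr h3
    have hcomb := HasSum.add_disjoint hdisj hΓsum hRsum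
    have hfin : f' + (⟪h0, f⟫ : ℂ) • v = f := by rw [hf'def]; abel
    rw [hfin] at hcomb
    exact hcomb
end
end

section
/- Let H be an infinite-dimensional separable complex Hilbert space. There exist a bounded normal operator A : H → H, a vector x ∈ H, and an infinite set Γ ⊆ ℕ ∪ {0} such that Aⁿx ≠ 0 for all n ∈ Γ and the family (Aⁿx/‖Aⁿx‖)_{n∈Γ} is a frame for H. -/
open scoped ComplexInnerProductSpace

noncomputable section

open scoped ComplexInnerProductSpace ENNReal NNReal

noncomputable section

namespace Stmt17

variable {ι : Type*}

local notation "K" => lp (fun _ : ι => ℂ) 2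

lemma two_toReal : ((2 : ℝ≥0∞).toReal) = (2 : ℝ) := by norm_num

lemma sq_summable (z : K) : Summable (fun i => ‖z i‖ ^ 2) := by
  have := (lp.memℓp z).summable (p := 2) (by norm_num)
  convert this using 2 with i
  rw [two_toReal, ← Real.rpow_natCast ‖z i‖ 2]
  norm_num

lemma norm_sq_eq (z : K) : ‖z‖ ^ 2 = ∑' i, ‖z i‖ ^ 2 := by
  have := lp.norm_rpow_eq_tsum (p := 2) (by norm_num) z
  rw [two_toReal] at this
  calc ‖z‖ ^ 2 = ‖z‖ ^ (2 : ℝ) := by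
        rw [← Real.rpow_natCast ‖z‖ 2]; norm_num
    _ = ∑' i, ‖z i‖ ^ (2 : ℝ) := this
    _ = ∑' i, ‖z i‖ ^ 2 := by
        congr 1; funext i; rw [← Real.rpow_natCast ‖z i‖ 2]; norm_num

lemma norm_le_of_sq_le {a b : ℝ} (ha : 0 ≤ a) (hb : 0 ≤ b) (h : a ^ 2 ≤ b ^ 2) : a ≤ b := by
  nlinarith

lemma memℓp_of_le {f : ∀ _ : ι, ℂ} {g : ι → ℝ} (hg : Summable (fun i => g i ^ 2))
    (h : ∀ i, ‖f i‖ ≤ g i) : Memℓp f 2 := by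
  apply memℓp_gen
  rw [two_toReal]
  have he : ∀ i, ‖f i‖ ^ (2:ℝ) = ‖f i‖ ^ (2:ℕ) := fun i => by
    rw [← Real.rpow_natCast ‖f i‖ 2]; norm_num
  simp only [he]
  exact Summable.of_nonneg_of_le (fun i => by positivity)
    (fun i => by
      have h0 : (0:ℝ) ≤ ‖f i‖ := norm_nonneg _
      nlinarith [h i]) hg

variable (Λ : ι → ℝ)

lemma norm_lam_le (hΛ : ∀ i, |Λ i| ≤ 1) (i : ι) : ‖(Λ i : ℂ)‖ ≤ 1 := by
  rw [Complex.norm_real]; simpa using hΛ i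

/-- the pointwise multiplication map -/
def mulFun (hΛ : ∀ i, |Λ i| ≤ 1) (f : K) : K :=
  ⟨fun i => (Λ i : ℂ) * f i, by
    refine memℓp_of_le (sq_summable f) (fun i => ?_)
    rw [norm_mul]
    calc ‖(Λ i : ℂ)‖ * ‖f i‖ ≤ 1 * ‖f i‖ :=
          mul_le_mul_of_nonneg_right (norm_lam_le Λ hΛ i) (norm_nonneg _)
      _ = ‖f i‖ := one_mul _⟩

@[simp] lemma mulFun_apply (hΛ : ∀ i, |Λ i| ≤ 1) (f : K) (i : ι) : (mulFun Λ hΛ f) i = (Λ i : ℂ) * f i := rfl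

lemma norm_mulFun_le (hΛ : ∀ i, |Λ i| ≤ 1) (f : K) : ‖mulFun Λ hΛ f‖ ≤ ‖f‖ := by
  refine norm_le_of_sq_le (norm_nonneg _) (norm_nonneg _) ?_
  rw [norm_sq_eq, norm_sq_eq]
  refine Summable.tsum_le_tsum (fun i => ?_) (sq_summable _) (sq_summable f)
  have hle : ‖(mulFun Λ hΛ f) i‖ ≤ ‖f i‖ := by
    rw [mulFun_apply, norm_mul]
    calc ‖(Λ i : ℂ)‖ * ‖f i‖ ≤ 1 * ‖f i‖ :=
          mul_le_mul_of_nonneg_right (norm_lam_le Λ hΛ i) (norm_nonneg _)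
      _ = ‖f i‖ := one_mul _
  have h0 : (0:ℝ) ≤ ‖(mulFun Λ hΛ f) i‖ := norm_nonneg _
  nlinarith

/-- Diagonal multiplication operator on `ℓ²` with bounded real symbol. -/
def mulOp (hΛ : ∀ i, |Λ i| ≤ 1) : K →L[ℂ] K :=
  LinearMap.mkContinuous
    { toFun := mulFun Λ hΛ
      map_add' := fun f g => by
        ext i
        simp [mul_add]
      map_smul' := fun c f => by
        ext i
        simp
        ring }
    1
    (fun f => by simpa using norm_mulFun_le Λ hΛ f)

@[simp] lemma mulOp_apply (hΛ : ∀ i, |Λ i| ≤ 1) (f : K) (i : ι) : (mulOp Λ hΛ f) i = (Λ i : ℂ) * f i := rfl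

lemma mulOp_pow_apply (hΛ : ∀ i, |Λ i| ≤ 1) (n : ℕ) (f : K) (i : ι) :
    ((mulOp Λ hΛ) ^ n) f i = (Λ i : ℂ) ^ n * f i := by
  induction n generalizing f with
  | zero => simp
  | succ n ih =>
    rw [pow_succ, ContinuousLinearMap.mul_apply, ih, mulOp_apply, pow_succ]
    ring

lemma mulOp_symm (hΛ : ∀ i, |Λ i| ≤ 1) (f g : K) : ⟪mulOp Λ hΛ f, g⟫ = ⟪f, mulOp Λ hΛ g⟫ := by
  rw [lp.inner_eq_tsum, lp.inner_eq_tsum]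
  congr 1
  funext i
  simp only [mulOp_apply, RCLike.inner_apply]
  rw [map_mul, Complex.conj_ofReal]
  ring

end Stmt17
noncomputable section
namespace Stmt17

/-- eigenvalues -/
def lam (k : ℕ) : ℝ := (2:ℝ) ^ (-((4:ℝ)⁻¹ ^ k))
/-- coordinates of the cyclic vector -/
def cc (k : ℕ) : ℝ := (2:ℝ) ^ (-(2 * (8:ℝ) ^ k))
/-- the sampling times -/
def NN (k : ℕ) : ℕ := 2 * 32 ^ k
/-- coordinates of the orbit -/
def gam (j n : ℕ) : ℝ := cc j * lam j ^ n

lemma lam_pos (k : ℕ) : 0 < lam k := Real.rpow_pos_of_pos (by norm_num) _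
lemma lam_le_one (k : ℕ) : lam k ≤ 1 :=
  Real.rpow_le_one_of_one_le_of_nonpos (by norm_num) (neg_nonpos.mpr (by positivity))
lemma abs_lam_le (k : ℕ) : |lam k| ≤ 1 := by
  rw [abs_of_pos (lam_pos k)]; exact lam_le_one k
lemma cc_pos (k : ℕ) : 0 < cc k := Real.rpow_pos_of_pos (by norm_num) _
lemma gam_pos (j n : ℕ) : 0 < gam j n := mul_pos (cc_pos j) (pow_pos (lam_pos j) n)

lemma gam_eq (j n : ℕ) : gam j n = (2:ℝ) ^ (-(2 * (8:ℝ) ^ j) - n * (4:ℝ)⁻¹ ^ j) := by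
  rw [gam, lam, cc, ← Real.rpow_natCast ((2:ℝ) ^ (-((4:ℝ)⁻¹ ^ j))) n,
    ← Real.rpow_mul (by norm_num), ← Real.rpow_add (by norm_num)]
  ring_nf

lemma gam_self (k : ℕ) : gam k (NN k) = (2:ℝ) ^ (-(4 * (8:ℝ) ^ k)) := by
  rw [gam_eq, NN]
  congr 1
  push_cast
  have h : ((32:ℝ) ^ k) * (4:ℝ)⁻¹ ^ k = 8 ^ k := by
    rw [← mul_pow]; norm_num
  nlinarith [h]

lemma p1 (m : ℕ) (hm : 1 ≤ m) : 2 * m + 5 ≤ 8 ^ m := by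
  induction m with
  | zero => omega
  | succ n ih =>
    rcases Nat.eq_or_lt_of_le hm with h | h
    · simp [← h]
    · have h1 : 1 ≤ n := by omega
      have := ih h1
      have h2 : 8 ^ n ≤ 8 ^ (n+1) := Nat.pow_le_pow_right (by norm_num) (by omega)
      calc 2 * (n+1) + 5 = (2*n+5) + 2 := by ring
        _ ≤ 8 ^ n + 2 := by omega
        _ ≤ 8 ^ (n+1) := by
            have : 8 ^ (n+1) = 8 * 8 ^ n := by ring
            have h3 : 1 ≤ 8 ^ n := Nat.one_le_pow _ _ (by norm_num)
            omega

lemma natKey {j k : ℕ} (h : j ≠ k) :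
    (4 * 8 ^ k + j + k + 6) * 4 ^ j ≤ 2 * 32 ^ j + 2 * 32 ^ k := by
  rcases Nat.lt_or_ge j k with hjk | hge
  · -- j < k : bound by 2 * 32 ^ k
    have h1 : (4 * 8 ^ k + j + k + 6) * 4 ^ j ≤ (8 * 8 ^ k) * 4 ^ j := by
      have : j + k + 6 ≤ 4 * 8 ^ k := by
        have hk1 : 1 ≤ k := by omega
        have := p1 k hk1
        have : 2 * k + 5 ≤ 8 ^ k := this
        omega
      exact Nat.mul_le_mul_right _ (by omega)
    have h2 : (8 * 8 ^ k) * 4 ^ j = 2 * 8 ^ k * 4 ^ (j+1) := by ring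
    have h3 : 4 ^ (j+1) ≤ 4 ^ k := Nat.pow_le_pow_right (by norm_num) (by omega)
    calc (4 * 8 ^ k + j + k + 6) * 4 ^ j ≤ 2 * 8 ^ k * 4 ^ (j+1) := by omega
      _ ≤ 2 * 8 ^ k * 4 ^ k := Nat.mul_le_mul_left _ h3
      _ = 2 * 32 ^ k := by rw [show (32:ℕ) = 8 * 4 by norm_num, mul_pow]; ring
      _ ≤ 2 * 32 ^ j + 2 * 32 ^ k := by omega
  · -- j > k : bound by 2 * 32 ^ j
    have hj : k < j := by omega
    have hj1 : 1 ≤ j := by omega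
    have h1 : 4 * 8 ^ k + j + k + 6 ≤ 2 * 8 ^ j := by
      have h4 : 8 ^ (k+1) ≤ 8 ^ j := Nat.pow_le_pow_right (by norm_num) (by omega)
      have h5 : 8 ^ (k+1) = 8 * 8 ^ k := by ring
      have h6 : j + k + 6 ≤ 2 * j + 5 := by omega
      have h7 := p1 j hj1
      omega
    calc (4 * 8 ^ k + j + k + 6) * 4 ^ j ≤ (2 * 8 ^ j) * 4 ^ j :=
          Nat.mul_le_mul_right _ h1
      _ = 2 * 32 ^ j := by rw [show (32:ℕ) = 8 * 4 by norm_num, mul_pow]; ring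
      _ ≤ 2 * 32 ^ j + 2 * 32 ^ k := by omega

/-- key exponent estimate -/
lemma expKey {j k : ℕ} (h : j ≠ k) :
    -(2 * (8:ℝ) ^ j) - (NN k : ℝ) * (4:ℝ)⁻¹ ^ j ≤ -(4 * (8:ℝ) ^ k) - (j + k + 6 : ℝ) := by
  have hnat := natKey h
  have hcast : ((4 * 8 ^ k + j + k + 6) * 4 ^ j : ℝ) ≤ (2 * 32 ^ j + 2 * 32 ^ k : ℝ) := by
    exact_mod_cast hnat
  have h4 : (0:ℝ) < (4:ℝ) ^ j := by positivity
  have hinv : ((4:ℝ)⁻¹ ^ j) * (4:ℝ) ^ j = 1 := by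
    rw [← mul_pow]; norm_num
  have h8 : (8:ℝ) ^ j * (4:ℝ) ^ j = 32 ^ j := by rw [← mul_pow]; norm_num
  have hNN : (NN k : ℝ) = 2 * 32 ^ k := by rw [NN]; push_cast; ring
  rw [hNN]
  nlinarith [hcast, hinv, h8, h4, mul_pos (mul_pos (by norm_num : (0:ℝ) < 2) (by positivity : (0:ℝ) < (32:ℝ)^k)) (by positivity : (0:ℝ) < (4:ℝ)⁻¹ ^ j)]

end Stmt17

namespace Stmt17

lemma gamKey {j k : ℕ} (h : j ≠ k) :
    gam j (NN k) ≤ gam k (NN k) * (2:ℝ) ^ (-(j + k + 6 : ℝ)) := by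
  rw [gam_eq, gam_self]
  rw [← Real.rpow_add (by norm_num : (0:ℝ) < 2)]
  exact Real.rpow_le_rpow_of_exponent_le (by norm_num) (by linarith [expKey h])

/-- the tail size -/
def tk (k : ℕ) : ℝ := (4:ℝ)⁻¹ ^ k / 1024

lemma tk_pos (k : ℕ) : 0 < tk k := by rw [tk]; positivity
lemma tk_le (k : ℕ) : tk k ≤ 1 / 1024 := by
  rw [tk]
  have : (4:ℝ)⁻¹ ^ k ≤ 1 := pow_le_one₀ (by norm_num) (by norm_num)
  linarith

lemma gamKey_sq {j k : ℕ} (h : j ≠ k) :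
    gam j (NN k) ^ 2 ≤ gam k (NN k) ^ 2 * ((4:ℝ)⁻¹ ^ j * (4:ℝ)⁻¹ ^ k / 4096) := by
  have h1 := gamKey h
  have key : ((2:ℝ) ^ (-(j + k + 6 : ℝ))) ^ 2 = (4:ℝ)⁻¹ ^ j * (4:ℝ)⁻¹ ^ k / 4096 := by
    rw [← Real.rpow_natCast ((2:ℝ) ^ (-(j + k + 6 : ℝ))) 2, ← Real.rpow_mul (by norm_num)]
    have : (-(j + k + 6 : ℝ)) * (2:ℕ) = (-(2*j:ℝ)) + (-(2*k:ℝ)) + (-12 : ℝ) := by push_cast; ring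
    rw [this, Real.rpow_add (by norm_num), Real.rpow_add (by norm_num)]
    have e1 : (2:ℝ) ^ (-(2*j:ℝ)) = (4:ℝ)⁻¹ ^ j := by
      rw [show (-(2*j:ℝ)) = (-2 : ℝ) * j by ring, Real.rpow_mul (by norm_num),
        Real.rpow_natCast]
      congr 1
      rw [show (-2:ℝ) = (-1) * 2 by ring, Real.rpow_mul (by norm_num)]
      norm_num
    have e2 : (2:ℝ) ^ (-(2*k:ℝ)) = (4:ℝ)⁻¹ ^ k := by
      rw [show (-(2*k:ℝ)) = (-2 : ℝ) * k by ring, Real.rpow_mul (by norm_num),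
        Real.rpow_natCast]
      congr 1
      rw [show (-2:ℝ) = (-1) * 2 by ring, Real.rpow_mul (by norm_num)]
      norm_num
    have e3 : (2:ℝ) ^ (-12:ℝ) = 1 / 4096 := by
      rw [show (-12:ℝ) = ((-12 : ℤ) : ℝ) by norm_num, Real.rpow_intCast]
      norm_num
    rw [e1, e2, e3]
    ring
  calc gam j (NN k) ^ 2 ≤ (gam k (NN k) * (2:ℝ) ^ (-(j + k + 6 : ℝ))) ^ 2 := by
        have := gam_pos j (NN k)
        nlinarith [h1, this]
    _ = gam k (NN k) ^ 2 * ((4:ℝ)⁻¹ ^ j * (4:ℝ)⁻¹ ^ k / 4096) := by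
        rw [mul_pow, key]

lemma gam_le_geom (j n : ℕ) : gam j n ≤ (2:ℝ)⁻¹ ^ j := by
  rw [gam_eq]
  have : (2:ℝ)⁻¹ ^ j = (2:ℝ) ^ (-(j:ℝ)) := by
    rw [Real.rpow_neg (by norm_num), Real.rpow_natCast, inv_pow]
  rw [this]
  apply Real.rpow_le_rpow_of_exponent_le (by norm_num)
  have h1 : (j:ℝ) ≤ (8:ℝ) ^ j := by
    calc (j:ℝ) ≤ 2^j := by exact_mod_cast (Nat.lt_two_pow_self (n := j)).le
      _ ≤ 8^j := by apply pow_le_pow_left₀ (by norm_num) (by norm_num)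
  have h2 : (0:ℝ) ≤ (n:ℝ) * (4:ℝ)⁻¹ ^ j := by positivity
  nlinarith

lemma gam_sq_summable (n : ℕ) : Summable (fun j => gam j n ^ 2) := by
  apply Summable.of_nonneg_of_le (fun j => by positivity) (fun j => ?_)
    (summable_geometric_of_lt_one (by norm_num) (by norm_num : (4:ℝ)⁻¹ < 1))
  calc gam j n ^ 2 ≤ ((2:ℝ)⁻¹ ^ j) ^ 2 := by
        nlinarith [gam_le_geom j n, gam_pos j n]
    _ = (4:ℝ)⁻¹ ^ j := by
        rw [← pow_mul, mul_comm, pow_mul]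
        norm_num

lemma normsq_bound (k : ℕ) :
    ∑' j, gam j (NN k) ^ 2 ≤ gam k (NN k) ^ 2 * (1 + tk k) := by
  rw [Summable.tsum_eq_add_tsum_ite (gam_sq_summable (NN k)) k]
  have hsum : ∑' j, (if j = k then 0 else gam j (NN k) ^ 2) ≤ gam k (NN k) ^ 2 * tk k := by
    have hs2 : Summable (fun j => gam k (NN k) ^ 2 * ((4:ℝ)⁻¹ ^ j * (4:ℝ)⁻¹ ^ k / 4096)) := by
      apply Summable.mul_left
      apply Summable.mul_right
      apply Summable.mul_right
      exact summable_geometric_of_lt_one (by norm_num) (by norm_num)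
    calc ∑' j, (if j = k then 0 else gam j (NN k) ^ 2)
        ≤ ∑' j, gam k (NN k) ^ 2 * ((4:ℝ)⁻¹ ^ j * (4:ℝ)⁻¹ ^ k / 4096) := by
          refine Summable.tsum_le_tsum (fun j => ?_) ?_ hs2
          · split_ifs with hj
            · positivity
            · exact gamKey_sq hj
          · apply Summable.of_nonneg_of_le (fun j => ?_) (fun j => ?_) hs2
            · split_ifs <;> positivity
            · split_ifs with hj
              · positivity
              · exact gamKey_sq hj
      _ = gam k (NN k) ^ 2 * ((4:ℝ)⁻¹ ^ k / 4096) * ∑' j, (4:ℝ)⁻¹ ^ j := by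
          rw [← tsum_mul_left]; congr 1; funext j; ring
      _ ≤ gam k (NN k) ^ 2 * tk k := by
          rw [tsum_geometric_of_lt_one (by norm_num) (by norm_num)]
          rw [tk]
          have h1 : (0:ℝ) < gam k (NN k) ^ 2 := pow_pos (gam_pos k (NN k)) 2
          have h4 : (0:ℝ) ≤ (4:ℝ)⁻¹ ^ k := by positivity
          rw [show (1 - (4:ℝ)⁻¹)⁻¹ = 4/3 by norm_num]
          nlinarith
  linarith

end Stmt17

namespace Stmt17

section Construction

variable {ι : Type*} [DecidableEq ι] (e : ℕ ≃ ι)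

local notation "K" => lp (fun _ : ι => ℂ) 2

/-- the symbol of the diagonal operator -/
def Lam : ι → ℝ := fun i => lam (e.symm i)

lemma absLam (i : ι) : |Lam e i| ≤ 1 := abs_lam_le _

/-- the diagonal operator -/
def M : K →L[ℂ] K := mulOp (Lam e) (absLam e)

lemma summable_cc_comp (n : ℕ) : Summable (fun i : ι => gam (e.symm i) n ^ 2) := by
  have h : Summable ((fun i : ι => gam (e.symm i) n ^ 2) ∘ e) := by
    apply (gam_sq_summable n).congr
    intro k
    simp

  exact (Equiv.summable_iff e).mp h

/-- the cyclic vector -/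
def xx : K :=
  ⟨fun i => (cc (e.symm i) : ℂ), by
    refine memℓp_of_le (f := fun i => (cc (e.symm i) : ℂ))
      (g := fun i => gam (e.symm i) 0) (summable_cc_comp e 0) (fun i => ?_)
    simp only [gam, pow_zero, mul_one, Complex.norm_real, Real.norm_eq_abs]
    rw [abs_of_pos (cc_pos _)]⟩

lemma xx_apply (i : ι) : (xx e) i = (cc (e.symm i) : ℂ) := rfl

lemma Mpow_apply (n : ℕ) (i : ι) :
    ((M e ^ n) (xx e)) i = (gam (e.symm i) n : ℂ) := by
  rw [M, mulOp_pow_apply, xx_apply]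
  simp only [gam, Lam]
  push_cast
  ring

lemma Mpow_norm_sq (n : ℕ) : ‖(M e ^ n) (xx e)‖ ^ 2 = ∑' j : ℕ, gam j n ^ 2 := by
  rw [norm_sq_eq]
  rw [← Equiv.tsum_eq e (fun i => ‖((M e ^ n) (xx e)) i‖ ^ 2)]
  congr 1
  funext k
  rw [Mpow_apply, Complex.norm_real, Real.norm_eq_abs, abs_of_pos (gam_pos _ _)]
  simp

lemma Mpow_ne_zero (n : ℕ) : (M e ^ n) (xx e) ≠ 0 := by
  intro h
  have h0 : ((M e ^ n) (xx e)) (e 0) = 0 := by rw [h]; simp [lp.coeFn_zero]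
  rw [Mpow_apply] at h0
  simp at h0
  exact absurd h0 (ne_of_gt (by simpa using gam_pos ((e.symm) (e 0)) n))

lemma Mpow_norm_pos (n : ℕ) : 0 < ‖(M e ^ n) (xx e)‖ :=
  norm_pos_iff.mpr (Mpow_ne_zero e n)

lemma Mpow_norm_lb (k : ℕ) : gam k (NN k) ≤ ‖(M e ^ (NN k)) (xx e)‖ := by
  have h1 : gam k (NN k) ^ 2 ≤ ‖(M e ^ (NN k)) (xx e)‖ ^ 2 := by
    rw [Mpow_norm_sq]
    have := Summable.tsum_eq_add_tsum_ite (gam_sq_summable (NN k)) k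
    rw [this]
    have h2 : 0 ≤ ∑' j, (if j = k then 0 else gam j (NN k) ^ 2) := by
      apply tsum_nonneg
      intro j
      split_ifs <;> positivity
    linarith
  exact norm_le_of_sq_le (le_of_lt (gam_pos _ _)) (norm_nonneg _) h1

lemma Mpow_norm_ub (k : ℕ) :
    ‖(M e ^ (NN k)) (xx e)‖ ≤ gam k (NN k) * (1 + tk k) := by
  refine norm_le_of_sq_le (norm_nonneg _)
    (mul_nonneg (gam_pos k (NN k)).le (by nlinarith [tk_pos k])) ?_
  rw [Mpow_norm_sq]
  calc ∑' j, gam j (NN k) ^ 2 ≤ gam k (NN k) ^ 2 * (1 + tk k) := normsq_bound k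
    _ ≤ (gam k (NN k) * (1 + tk k)) ^ 2 := by
        have h1 := gam_pos k (NN k)
        have h2 := tk_pos k
        nlinarith

/-- the normalized orbit vectors -/
def uu (k : ℕ) : K :=
  ((‖(M e ^ (NN k)) (xx e)‖ : ℂ))⁻¹ • (M e ^ (NN k)) (xx e)

/-- the comparison orthonormal basis -/
def gg (k : ℕ) : K := lp.single 2 (e k) (1 : ℂ)

lemma norm_uu (k : ℕ) : ‖uu e k‖ = 1 := by
  rw [uu, norm_smul]
  rw [norm_inv, Complex.norm_real, Real.norm_eq_abs, abs_of_pos (Mpow_norm_pos e (NN k))]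
  exact inv_mul_cancel₀ (ne_of_gt (Mpow_norm_pos e (NN k)))

lemma norm_gg (k : ℕ) : ‖gg e k‖ = 1 := by
  rw [gg]
  have := lp.norm_single (p := 2) (E := fun _ : ι => ℂ) (by norm_num)
    (e k) (1:ℂ)
  simpa using this

lemma inner_gg_uu (k : ℕ) :
    ⟪gg e k, uu e k⟫ = ((gam k (NN k) / ‖(M e ^ (NN k)) (xx e)‖ : ℝ) : ℂ) := by
  rw [gg, lp.inner_single_left]
  rw [RCLike.inner_apply, map_one, mul_one]
  rw [uu]
  have : ((((‖(M e ^ (NN k)) (xx e)‖ : ℝ) : ℂ))⁻¹ • (M e ^ (NN k)) (xx e)) (e k)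
      = (((‖(M e ^ (NN k)) (xx e)‖ : ℝ) : ℂ))⁻¹ * ((M e ^ (NN k)) (xx e)) (e k) := by
    rw [lp.coeFn_smul]
    simp
  rw [this, Mpow_apply]
  simp only [Equiv.symm_apply_apply]
  rw [Complex.ofReal_div]
  ring

lemma dist_uu_gg_sq (k : ℕ) : ‖uu e k - gg e k‖ ^ 2 ≤ 2 * tk k := by
  have hre : ‖uu e k - gg e k‖ ^ 2
      = ‖uu e k‖ ^ 2 - 2 * Complex.re ⟪uu e k, gg e k⟫ + ‖gg e k‖ ^ 2 := by
    exact norm_sub_sq (𝕜 := ℂ) _ _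
  have hinner : Complex.re ⟪uu e k, gg e k⟫
      = gam k (NN k) / ‖(M e ^ (NN k)) (xx e)‖ := by
    rw [← inner_conj_symm, inner_gg_uu]
    simp
  have hge : gam k (NN k) / ‖(M e ^ (NN k)) (xx e)‖ ≥ 1 / (1 + tk k) := by
    have hub := Mpow_norm_ub e k
    have h1 := gam_pos k (NN k)
    have h2 := tk_pos k
    have h3 := Mpow_norm_pos e (NN k)
    rw [ge_iff_le, div_le_div_iff₀ (by positivity) h3]
    nlinarith
  have h2 := tk_pos k
  rw [hre, hinner, norm_uu, norm_gg]
  have : 1 / (1 + tk k) ≥ 1 - tk k := by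
    rw [ge_iff_le, le_div_iff₀ (by positivity)]
    nlinarith
  nlinarith

lemma inner_uu (k : ℕ) (z : K) :
    ⟪uu e k, z⟫ = z (e k) + ⟪uu e k - gg e k, z⟫ := by
  have : ⟪gg e k, z⟫ = z (e k) := by
    rw [gg, lp.inner_single_left, RCLike.inner_apply, map_one, mul_one]
  rw [← this]
  rw [← inner_add_left]
  congr 1
  abel

lemma summable_tk : Summable tk := by
  apply Summable.div_const
  exact summable_geometric_of_lt_one (by norm_num) (by norm_num)

lemma tsum_tk : ∑' k, tk k = 1 / 768 := by
  simp only [tk]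
  rw [tsum_div_const, tsum_geometric_of_lt_one (by norm_num) (by norm_num)]
  norm_num

lemma bk_sq_le (k : ℕ) (z : K) :
    ‖⟪uu e k - gg e k, z⟫‖ ^ 2 ≤ 2 * tk k * ‖z‖ ^ 2 := by
  have hcs : ‖⟪uu e k - gg e k, z⟫‖ ≤ ‖uu e k - gg e k‖ * ‖z‖ :=
    norm_inner_le_norm _ _
  have h1 := dist_uu_gg_sq e k
  have h2 : (0:ℝ) ≤ ‖⟪uu e k - gg e k, z⟫‖ := norm_nonneg _
  have h3 : (0:ℝ) ≤ ‖uu e k - gg e k‖ := norm_nonneg _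
  have h4 : (0:ℝ) ≤ ‖z‖ := norm_nonneg _
  nlinarith

lemma summable_az (z : K) : Summable (fun k : ℕ => ‖z (e k)‖ ^ 2) := by
  have h : Summable ((fun i : ι => ‖z i‖ ^ 2) ∘ e) := (Equiv.summable_iff e).mpr (sq_summable z)
  exact h.congr (fun k => rfl)

lemma tsum_az (z : K) : ∑' k : ℕ, ‖z (e k)‖ ^ 2 = ‖z‖ ^ 2 := by
  rw [norm_sq_eq, ← Equiv.tsum_eq e (fun i => ‖z i‖ ^ 2)]

lemma summable_tkz (z : K) : Summable (fun k : ℕ => 2 * tk k * ‖z‖ ^ 2) := by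
  exact (summable_tk.mul_left 2).mul_right _

lemma tsum_tkz (z : K) : ∑' k : ℕ, 2 * tk k * ‖z‖ ^ 2 = (1/384) * ‖z‖ ^ 2 := by
  rw [tsum_mul_right, tsum_mul_left, tsum_tk]
  ring

lemma term_ub (k : ℕ) (z : K) :
    ‖⟪uu e k, z⟫‖ ^ 2 ≤ 2 * ‖z (e k)‖ ^ 2 + 2 * (2 * tk k * ‖z‖ ^ 2) := by
  rw [inner_uu]
  have htri : ‖z (e k) + ⟪uu e k - gg e k, z⟫‖ ≤ ‖z (e k)‖ + ‖⟪uu e k - gg e k, z⟫‖ :=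
    norm_add_le _ _
  have hb := bk_sq_le e k z
  have h1 : (0:ℝ) ≤ ‖z (e k)‖ := norm_nonneg _
  have h2 : (0:ℝ) ≤ ‖⟪uu e k - gg e k, z⟫‖ := norm_nonneg _
  have h3 : (0:ℝ) ≤ ‖z (e k) + ⟪uu e k - gg e k, z⟫‖ := norm_nonneg _
  nlinarith [mul_self_le_mul_self h3 htri,
    sq_nonneg (‖z (e k)‖ - ‖⟪uu e k - gg e k, z⟫‖)]

lemma term_lb (k : ℕ) (z : K) :
    (1/2) * ‖z (e k)‖ ^ 2 - 2 * tk k * ‖z‖ ^ 2 ≤ ‖⟪uu e k, z⟫‖ ^ 2 := by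
  rw [inner_uu]
  have htri : ‖z (e k)‖ ≤ ‖z (e k) + ⟪uu e k - gg e k, z⟫‖ + ‖⟪uu e k - gg e k, z⟫‖ := by
    calc ‖z (e k)‖ = ‖(z (e k) + ⟪uu e k - gg e k, z⟫) - ⟪uu e k - gg e k, z⟫‖ := by
          congr 1; ring
      _ ≤ ‖z (e k) + ⟪uu e k - gg e k, z⟫‖ + ‖⟪uu e k - gg e k, z⟫‖ := norm_sub_le _ _
  have hb := bk_sq_le e k z
  have h1 : (0:ℝ) ≤ ‖z (e k)‖ := norm_nonneg _
  have h2 : (0:ℝ) ≤ ‖⟪uu e k - gg e k, z⟫‖ := norm_nonneg _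
  have h3 : (0:ℝ) ≤ ‖z (e k) + ⟪uu e k - gg e k, z⟫‖ := norm_nonneg _
  nlinarith [mul_self_le_mul_self h1 htri,
    sq_nonneg (‖z (e k) + ⟪uu e k - gg e k, z⟫‖ - ‖⟪uu e k - gg e k, z⟫‖)]

lemma summable_term (z : K) : Summable (fun k : ℕ => ‖⟪uu e k, z⟫‖ ^ 2) := by
  apply Summable.of_nonneg_of_le (fun k => by positivity) (fun k => term_ub e k z)
  exact ((summable_az e z).mul_left 2).add ((summable_tkz z).mul_left 2)

/-- frame bounds at the `ℓ²` level -/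
lemma frameK (z : K) :
    (1/4 : ℝ) * ‖z‖ ^ 2 ≤ ∑' k : ℕ, ‖⟪uu e k, z⟫‖ ^ 2 ∧
      ∑' k : ℕ, ‖⟪uu e k, z⟫‖ ^ 2 ≤ 3 * ‖z‖ ^ 2 := by
  constructor
  · have hle : ∑' k : ℕ, ((1/2) * ‖z (e k)‖ ^ 2 - 2 * tk k * ‖z‖ ^ 2)
        ≤ ∑' k : ℕ, ‖⟪uu e k, z⟫‖ ^ 2 := by
      refine Summable.tsum_le_tsum (fun k => term_lb e k z) ?_ (summable_term e z)
      exact ((summable_az e z).mul_left _).sub (summable_tkz z)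
    have heq : ∑' k : ℕ, ((1/2) * ‖z (e k)‖ ^ 2 - 2 * tk k * ‖z‖ ^ 2)
        = (1/2) * ‖z‖ ^ 2 - (1/384) * ‖z‖ ^ 2 := by
      rw [Summable.tsum_sub ((summable_az e z).mul_left _) (summable_tkz z),
        tsum_mul_left, tsum_az, tsum_tkz]
    have hnn : (0:ℝ) ≤ ‖z‖ ^ 2 := by positivity
    nlinarith [hle, heq]
  · have hle : ∑' k : ℕ, ‖⟪uu e k, z⟫‖ ^ 2
        ≤ ∑' k : ℕ, (2 * ‖z (e k)‖ ^ 2 + 2 * (2 * tk k * ‖z‖ ^ 2)) := by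
      refine Summable.tsum_le_tsum (fun k => term_ub e k z) (summable_term e z) ?_
      exact ((summable_az e z).mul_left 2).add ((summable_tkz z).mul_left 2)
    have heq : ∑' k : ℕ, (2 * ‖z (e k)‖ ^ 2 + 2 * (2 * tk k * ‖z‖ ^ 2))
        = 2 * ‖z‖ ^ 2 + 2 * ((1/384) * ‖z‖ ^ 2) := by
      rw [Summable.tsum_add ((summable_az e z).mul_left 2) ((summable_tkz z).mul_left 2),
        tsum_mul_left, tsum_az, tsum_mul_left, tsum_tkz]
    have hnn : (0:ℝ) ≤ ‖z‖ ^ 2 := by positivity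
    nlinarith [hle, heq]

end Construction

end Stmt17

namespace Stmt17

section Transport

variable {H : Type*} [NormedAddCommGroup H] [InnerProductSpace ℂ H]

lemma orthonormal_countable [TopologicalSpace.SeparableSpace H]
    {w : Set H} (hw : Orthonormal ℂ ((↑) : w → H)) : Countable w := by
  apply Pairwise.countable_of_isOpen_disjoint (s := fun i : w => Metric.ball (i : H) 2⁻¹)
  · intro i j hij
    apply Metric.ball_disjoint_ball
    have hij' : (⟪(i : H), (j : H)⟫ : ℂ) = 0 := hw.2 hij
    have h1 : ‖(i : H) - (j : H)‖ ^ 2 = 2 := by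
      rw [norm_sub_sq (𝕜 := ℂ), hij']
      rw [hw.1 i, hw.1 j]
      norm_num
    have h2 : dist (i : H) (j : H) = ‖(i : H) - (j : H)‖ := dist_eq_norm _ _
    have h3 : (0:ℝ) ≤ dist (i : H) (j : H) := dist_nonneg
    nlinarith
  · intro i; exact Metric.isOpen_ball
  · intro i; exact Metric.nonempty_ball.mpr (by norm_num)

lemma basis_infinite (hinf : ¬ FiniteDimensional ℂ H) {w : Set H}
    (b : HilbertBasis w ℂ H) (hb : ⇑b = ((↑) : w → H)) : w.Infinite := by
  rw [Set.infinite_coe_iff.symm]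
  by_contra hfin
  rw [not_infinite_iff_finite] at hfin
  have hwfin : w.Finite := Set.toFinite w
  apply hinf
  have h3 := b.dense_span
  rw [hb, Subtype.range_coe] at h3
  have h1 : FiniteDimensional ℂ (Submodule.span ℂ w) := FiniteDimensional.span_of_finite ℂ hwfin
  have h2 := (Submodule.span ℂ w).closed_of_finiteDimensional
  have hspan : Submodule.span ℂ w = ⊤ := by
    refine le_antisymm le_top ?_
    rw [← h3]
    exact Submodule.topologicalClosure_minimal _ le_rfl h2
  exact Module.finite_def.mpr (Submodule.fg_def.mpr ⟨w, hwfin, hspan⟩)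

end Transport

end Stmt17

namespace Stmt17

section Main

variable {H : Type*} [NormedAddCommGroup H] [InnerProductSpace ℂ H] [CompleteSpace H]
variable {ι : Type*} [DecidableEq ι] (e : ℕ ≃ ι) (E : H ≃ₗᵢ[ℂ] lp (fun _ : ι => ℂ) 2)

local notation "K" => lp (fun _ : ι => ℂ) 2

/-- the transported diagonal operator -/
def AH : H →L[ℂ] H :=
  (E.symm.toLinearIsometry.toContinuousLinearMap).comp
    ((M e).comp (E.toLinearIsometry.toContinuousLinearMap))

lemma AH_apply (y : H) : AH e E y = E.symm ((M e) (E y)) := rfl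

lemma AH_pow_apply (n : ℕ) (y : H) : ((AH e E) ^ n) y = E.symm ((M e ^ n) (E y)) := by
  induction n generalizing y with
  | zero => simp
  | succ n ih =>
    rw [pow_succ, ContinuousLinearMap.mul_apply, AH_apply, ih,
      LinearIsometryEquiv.apply_symm_apply, pow_succ, ContinuousLinearMap.mul_apply]

lemma inner_symm_left (u : K) (y : H) : ⟪E.symm u, y⟫ = ⟪u, E y⟫ := by
  conv_lhs => rw [show y = E.symm (E y) from (E.symm_apply_apply y).symm]
  exact E.symm.inner_map_map u (E y)

lemma inner_symm_right (y : H) (u : K) : ⟪y, E.symm u⟫ = ⟪E y, u⟫ := by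
  conv_lhs => rw [show y = E.symm (E y) from (E.symm_apply_apply y).symm]
  exact E.symm.inner_map_map (E y) u

lemma AH_selfadjoint : AH e E = ContinuousLinearMap.adjoint (AH e E) := by
  rw [ContinuousLinearMap.eq_adjoint_iff]
  intro a y
  rw [AH_apply, AH_apply, inner_symm_left, inner_symm_right]
  exact mulOp_symm (Lam e) (absLam e) (E a) (E y)

lemma NN_injective : Function.Injective NN := by
  have h : StrictMono NN := by
    apply strictMono_nat_of_lt_succ
    intro k
    rw [NN, NN]
    have : (32:ℕ) ^ k < 32 ^ (k+1) := Nat.pow_lt_pow_succ (by norm_num)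
    omega
  exact h.injective

lemma AH_pow_x (n : ℕ) : ((AH e E) ^ n) (E.symm (xx e)) = E.symm ((M e ^ n) (xx e)) := by
  rw [AH_pow_apply, LinearIsometryEquiv.apply_symm_apply]

lemma AH_pow_x_ne (n : ℕ) : ((AH e E) ^ n) (E.symm (xx e)) ≠ 0 := by
  rw [AH_pow_x]
  intro h
  exact Mpow_ne_zero e n (by simpa using h)

lemma term_eq (n : ℕ) (y : H) :
    ⟪(‖((AH e E) ^ n) (E.symm (xx e))‖ : ℂ)⁻¹ • ((AH e E) ^ n) (E.symm (xx e)), y⟫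
      = ⟪(‖(M e ^ n) (xx e)‖ : ℂ)⁻¹ • ((M e ^ n) (xx e)), E y⟫ := by
  rw [AH_pow_x]
  have hnorm : ‖E.symm ((M e ^ n) (xx e))‖ = ‖(M e ^ n) (xx e)‖ :=
    E.symm.norm_map _
  rw [hnorm, ← map_smul, inner_symm_left]

theorem main_frame (y : H) :
    (1/4 : ℝ) * ‖y‖ ^ 2 ≤
      ∑' (n : ↥(Set.range NN)),
        ‖⟪(‖((AH e E) ^ (n : ℕ)) (E.symm (xx e))‖ : ℂ)⁻¹ •
          ((AH e E) ^ (n : ℕ)) (E.symm (xx e)), y⟫‖ ^ 2 ∧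
      ∑' (n : ↥(Set.range NN)),
        ‖⟪(‖((AH e E) ^ (n : ℕ)) (E.symm (xx e))‖ : ℂ)⁻¹ •
          ((AH e E) ^ (n : ℕ)) (E.symm (xx e)), y⟫‖ ^ 2 ≤ 3 * ‖y‖ ^ 2 := by
  set F : ↥(Set.range NN) → ℝ := fun n =>
    ‖⟪(‖((AH e E) ^ (n : ℕ)) (E.symm (xx e))‖ : ℂ)⁻¹ •
      ((AH e E) ^ (n : ℕ)) (E.symm (xx e)), y⟫‖ ^ 2 with hF
  have hre : ∑' (n : ↥(Set.range NN)), F n = ∑' k : ℕ, ‖⟪uu e k, E y⟫‖ ^ 2 := by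
    rw [← Equiv.tsum_eq (Equiv.ofInjective NN NN_injective) F]
    congr 1
    funext k
    have hco : ((Equiv.ofInjective NN NN_injective k : ↥(Set.range NN)) : ℕ) = NN k := rfl
    rw [hF]
    simp only [hco]
    rw [term_eq, uu]
  have hn : ‖y‖ = ‖E y‖ := (E.norm_map y).symm
  rw [hre, hn]
  exact ⟨(frameK e (E y)).1, (frameK e (E y)).2⟩

end Main

end Stmt17

/-- There exist a bounded normal operator `A`, a vector `x` and an infinite set
`Γ ⊆ ℕ` such that the normalized orbit `(Aⁿx/‖Aⁿx‖)_{n ∈ Γ}` is a frame. -/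
theorem stmt17 (H : Type*) [NormedAddCommGroup H] [InnerProductSpace ℂ H]
    [CompleteSpace H] [TopologicalSpace.SeparableSpace H]
    (hinf : ¬ FiniteDimensional ℂ H) :
    ∃ (A : H →L[ℂ] H) (x : H) (Γ : Set ℕ),
      A ∘L ContinuousLinearMap.adjoint A = ContinuousLinearMap.adjoint A ∘L A ∧
      Γ.Infinite ∧ (∀ n ∈ Γ, (A ^ n) x ≠ 0) ∧
      IsFrame (fun n : Γ => (‖(A ^ (n : ℕ)) x‖ : ℂ)⁻¹ • (A ^ (n : ℕ)) x) := by
  obtain ⟨w, b, hb⟩ := exists_hilbertBasis ℂ H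
  have hw : Orthonormal ℂ ((↑) : w → H) := by
    have := b.orthonormal
    rwa [hb] at this
  haveI : Countable w := Stmt17.orthonormal_countable hw
  haveI : Infinite w := Set.infinite_coe_iff.mpr (Stmt17.basis_infinite hinf b hb)
  haveI : DecidableEq ↥w := Classical.decEq _
  obtain ⟨d⟩ := nonempty_denumerable (↥w)
  let e : ℕ ≃ ↥w := (Denumerable.eqv (↥w)).symm
  let E := b.repr
  refine ⟨Stmt17.AH e E, E.symm (Stmt17.xx e), Set.range Stmt17.NN, ?_, ?_, ?_, ?_⟩
  · rw [← Stmt17.AH_selfadjoint]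
  · exact Set.infinite_range_of_injective Stmt17.NN_injective
  · intro n _
    exact Stmt17.AH_pow_x_ne e E n
  · refine ⟨1/4, 3, by norm_num, by norm_num, fun y => ?_⟩
    exact Stmt17.main_frame e E y
end
end
end
end
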